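/- arXiv:2004.01741 — 3 statements merged into one kernel-verified Lean document; each statement's English description precedes it below -/
import Mathlib

section
/- The nearest neighbor complexity of the mod 2 inner product function on 2n variables satisfies NN(IPₙ) ≥ 2^{n/2}. -/
open Finset

noncomputable section

noncomputable instance {n : ℕ} : DecidableEq (EuclideanSpace ℝ (Fin n)) :=
  fun _ _ => Classical.propDecidable _

/-- The embedding of a Boolean value into `ℝ`. -/
def boolToR (b : Bool) : ℝ := if b then 1 else 0

/-- The embedding of a Boolean vector into Euclidean space `ℝ^n`. -/
def toPoint {n : ℕ} (a : Fin n → Bool) : EuclideanSpace ℝ (Fin n) :=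
  WithLp.toLp 2 (fun i => boolToR (a i))

/-- `(P, N)` is a nearest neighbor representation of the Boolean function `f`:
`P` and `N` are disjoint finite sets of points of `ℝ^n` such that for every Boolean
vector `a`, if `f a = 1` then some `b ∈ P` is strictly closer to `a` than every `c ∈ N`,
and if `f a = 0` then some `b ∈ N` is strictly closer to `a` than every `c ∈ P`. -/
def IsNNRep {n : ℕ} (f : (Fin n → Bool) → Bool)
    (P N : Finset (EuclideanSpace ℝ (Fin n))) : Prop :=
  Disjoint P N ∧
  ∀ a : Fin n → Bool,
    (f a = true → ∃ b ∈ P, ∀ c ∈ N, dist (toPoint a) b < dist (toPoint a) c) ∧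
    (f a = false → ∃ b ∈ N, ∀ c ∈ P, dist (toPoint a) b < dist (toPoint a) c)

/-- The nearest neighbor complexity of `f`: the minimum size `|P ∪ N|` of a nearest
neighbor representation `(P, N)` of `f`. -/
def NN {n : ℕ} (f : (Fin n → Bool) → Bool) : ℕ :=
  sInf {m | ∃ P N, IsNNRep f P N ∧ (P ∪ N).card = m}

/-- A point of `ℝ^n` is Boolean if all of its coordinates are `0` or `1`. -/
def IsBooleanPoint {n : ℕ} (p : EuclideanSpace ℝ (Fin n)) : Prop :=
  ∀ i, p i = 0 ∨ p i = 1

/-- The Boolean nearest neighbor complexity of `f`: the minimum size `|P ∪ N|` of a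
nearest neighbor representation of `f` all of whose prototypes are Boolean points. -/
def BNN {n : ℕ} (f : (Fin n → Bool) → Bool) : ℕ :=
  sInf {m | ∃ P N, IsNNRep f P N ∧ (∀ p ∈ P ∪ N, IsBooleanPoint p) ∧ (P ∪ N).card = m}

/-- The weight (number of `1` components) of a Boolean vector. -/
def wt {n : ℕ} (x : Fin n → Bool) : ℕ := (Finset.univ.filter fun i => x i = true).card

/-- The mod 2 inner product function
`IPₙ(x₁,…,xₙ,y₁,…,yₙ) = (x₁ ∧ y₁) ⊕ ⋯ ⊕ (xₙ ∧ yₙ)` on `2n` variables. -/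
def IP (n : ℕ) (x : Fin (2 * n) → Bool) : Bool :=
  decide (Odd ((Finset.univ.filter (fun i : Fin n =>
    x ⟨i.val, by have := i.isLt; omega⟩ = true ∧
    x ⟨n + i.val, by have := i.isLt; omega⟩ = true)).card))

namespace NNIP

variable {n : ℕ}

/-- join two boolean vectors into one of length 2n -/
def join (n : ℕ) (x y : Fin n → Bool) : Fin (2*n) → Bool :=
  fun i => if h : (i : ℕ) < n then x ⟨i, h⟩ else y ⟨(i : ℕ) - n, by have := i.isLt; omega⟩

def cnt (n : ℕ) (x y : Fin n → Bool) : ℕ :=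
  (Finset.univ.filter fun i => x i = true ∧ y i = true).card

lemma IP_join (x y : Fin n → Bool) : IP n (join n x y) = decide (Odd (cnt n x y)) := by
  unfold IP cnt
  congr 2
  congr 1
  refine Finset.filter_congr fun i _ => ?_
  have h1 : join n x y ⟨(i : ℕ), by have := i.isLt; omega⟩ = x i := by
    simp only [join]
    rw [dif_pos i.isLt, Fin.eta]
  have h2 : join n x y ⟨n + (i : ℕ), by have := i.isLt; omega⟩ = y i := by
    simp only [join]
    rw [dif_neg (by omega : ¬ (n + (i:ℕ) < n))]
    congr 1
    ext
    simp
  rw [h1, h2]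

def chi (n : ℕ) (x y : Fin n → Bool) : ℝ := (-1 : ℝ) ^ (cnt n x y)

lemma chi_eq_prod (x y : Fin n → Bool) :
    chi n x y = ∏ i : Fin n, (if x i = true ∧ y i = true then (-1:ℝ) else 1) := by
  rw [chi, cnt, Finset.card_filter, ← Finset.prod_pow_eq_pow_sum]
  apply Finset.prod_congr rfl
  intro i _
  by_cases h : x i = true ∧ y i = true <;> simp [h]

lemma chi_sq (x y : Fin n → Bool) : chi n x y * chi n x y = 1 := by
  rw [chi, ← pow_add]
  exact (neg_one_pow_eq_one_iff_even (by norm_num)).2 (Even.add_self _)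

lemma chi_flip (x y : Fin n → Bool) (i₀ : Fin n) (hx : x i₀ = true) :
    chi n x (Function.update y i₀ (!y i₀)) = - chi n x y := by
  rw [chi_eq_prod, chi_eq_prod]
  rw [← Finset.mul_prod_erase Finset.univ _ (Finset.mem_univ i₀),
      ← Finset.mul_prod_erase Finset.univ
        (fun i => (if x i = true ∧ y i = true then (-1:ℝ) else 1)) (Finset.mem_univ i₀)]
  have hrest : ∀ i ∈ Finset.univ.erase i₀,
      (if x i = true ∧ (Function.update y i₀ (!y i₀)) i = true then (-1:ℝ) else 1)
      = (if x i = true ∧ y i = true then (-1:ℝ) else 1) := by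
    intro i hi
    rw [Function.update_of_ne (Finset.mem_erase.1 hi).1]
  rw [Finset.prod_congr rfl hrest, Function.update_self, hx]
  cases hy : y i₀
  · simp
  · simp

lemma chi_flip_not (x y : Fin n → Bool) (i₀ : Fin n) (hx : x i₀ = false) :
    chi n x (Function.update y i₀ (!y i₀)) = chi n x y := by
  rw [chi_eq_prod, chi_eq_prod]
  apply Finset.prod_congr rfl
  intro i _
  by_cases hi : i = i₀
  · subst hi; simp [hx]
  · rw [Function.update_of_ne hi]

lemma sum_chi_mul_eq_zero {x x' : Fin n → Bool} (hxx : x ≠ x') :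
    ∑ y : Fin n → Bool, chi n x y * chi n x' y = 0 := by
  have hex : ∃ i₀, x i₀ ≠ x' i₀ := by
    by_contra hc
    push_neg at hc
    exact hxx (funext hc)
  obtain ⟨i₀, hi₀⟩ := hex
  have key : ∀ y : Fin n → Bool,
      chi n x (Function.update y i₀ (!y i₀)) * chi n x' (Function.update y i₀ (!y i₀))
      = -(chi n x y * chi n x' y) := by
    intro y
    cases hx : x i₀ with
    | false =>
      have hx' : x' i₀ = true := by
        cases hx2 : x' i₀
        · exact absurd (by rw [hx, hx2]) hi₀
        · rfl
      rw [chi_flip_not x y i₀ hx, chi_flip x' y i₀ hx']; ring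
    | true =>
      cases hx2 : x' i₀ with
      | false => rw [chi_flip x y i₀ hx, chi_flip_not x' y i₀ hx2]; ring
      | true => exact absurd (by rw [hx, hx2]) hi₀
  refine Finset.sum_involution (fun y _ => Function.update y i₀ (!y i₀)) ?_ ?_
    (fun y _ => Finset.mem_univ _) ?_
  · intro y _
    rw [key y]; ring
  · intro y _ _ heq
    have h2 : Function.update y i₀ (!y i₀) = y := heq
    have := congrFun h2 i₀
    rw [Function.update_self] at this
    cases hy : y i₀ <;> rw [hy] at this <;> simp at this
  · intro y _
    show Function.update (Function.update y i₀ (!y i₀)) i₀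
        (!(Function.update y i₀ (!y i₀) i₀)) = y
    funext i
    by_cases hi : i = i₀
    · subst hi
      rw [Function.update_self, Function.update_self]
      cases hy : y i <;> simp [Function.update_self, hy]
    · rw [Function.update_of_ne hi, Function.update_of_ne hi]

lemma card_bool_fun : (Finset.univ : Finset (Fin n → Bool)).card = 2 ^ n := by
  classical
  rw [← Fintype.card, Fintype.card_fun]
  simp

/-- Parseval-type identity -/
lemma sum_sq_hat (u : (Fin n → Bool) → ℝ) :
    ∑ y : Fin n → Bool, (∑ x : Fin n → Bool, chi n x y * u x)^2
      = 2^n * ∑ x : Fin n → Bool, (u x)^2 := by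
  have expand : ∀ y, (∑ x : Fin n → Bool, chi n x y * u x)^2
      = ∑ x : Fin n → Bool, ∑ x' : Fin n → Bool,
          (u x * u x') * (chi n x y * chi n x' y) := by
    intro y
    rw [sq, Finset.sum_mul_sum]
    apply Finset.sum_congr rfl; intro x _
    apply Finset.sum_congr rfl; intro x' _
    ring
  calc ∑ y : Fin n → Bool, (∑ x, chi n x y * u x)^2
      = ∑ x : Fin n → Bool, ∑ x' : Fin n → Bool,
          (u x * u x') * (∑ y : Fin n → Bool, chi n x y * chi n x' y) := by
        rw [Finset.sum_congr rfl (fun y _ => expand y)]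
        rw [Finset.sum_comm]
        apply Finset.sum_congr rfl; intro x _
        rw [Finset.sum_comm]
        apply Finset.sum_congr rfl; intro x' _
        rw [Finset.mul_sum]
    _ = ∑ x : Fin n → Bool, (u x * u x) * (2^n : ℝ) := by
        apply Finset.sum_congr rfl; intro x _
        rw [Finset.sum_eq_single x]
        · congr 1
          have : ∀ y : Fin n → Bool, chi n x y * chi n x y = 1 := chi_sq x
          rw [Finset.sum_congr rfl (fun y _ => this y), Finset.sum_const, card_bool_fun]
          simp
        · intro x' _ hx'
          rw [sum_chi_mul_eq_zero (Ne.symm hx'), mul_zero]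
        · intro h; exact absurd (Finset.mem_univ x) h
    _ = 2^n * ∑ x : Fin n → Bool, (u x)^2 := by
        rw [Finset.mul_sum]
        apply Finset.sum_congr rfl; intro x _
        rw [sq]; ring

/-- The spectral (Lindsey-type) bound. -/
lemma pairing_bound (u v : (Fin n → Bool) → ℝ) :
    |∑ x : Fin n → Bool, ∑ y : Fin n → Bool, chi n x y * (u x * v y)|
      ≤ Real.sqrt (2^n) * (Real.sqrt (∑ x, (u x)^2) * Real.sqrt (∑ y, (v y)^2)) := by
  have hre : ∑ x : Fin n → Bool, ∑ y : Fin n → Bool, chi n x y * (u x * v y)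
      = ∑ y : Fin n → Bool, (∑ x, chi n x y * u x) * v y := by
    rw [Finset.sum_comm]
    apply Finset.sum_congr rfl; intro y _
    rw [Finset.sum_mul]
    apply Finset.sum_congr rfl; intro x _
    ring
  rw [hre]
  have hcs : (∑ y : Fin n → Bool, (∑ x, chi n x y * u x) * v y)^2
      ≤ (∑ y : Fin n → Bool, (∑ x, chi n x y * u x)^2) * (∑ y, (v y)^2) :=
    Finset.sum_mul_sq_le_sq_mul_sq _ _ _
  rw [sum_sq_hat] at hcs
  have h1 : |∑ y : Fin n → Bool, (∑ x, chi n x y * u x) * v y|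
      = Real.sqrt ((∑ y : Fin n → Bool, (∑ x, chi n x y * u x) * v y)^2) := by
    rw [Real.sqrt_sq_eq_abs]
  rw [h1]
  calc Real.sqrt ((∑ y : Fin n → Bool, (∑ x, chi n x y * u x) * v y)^2)
      ≤ Real.sqrt (2^n * ((∑ x, (u x)^2) * (∑ y, (v y)^2))) := by
        apply Real.sqrt_le_sqrt
        exact le_of_le_of_eq hcs (by ring)
    _ = Real.sqrt (2^n) * (Real.sqrt (∑ x, (u x)^2) * Real.sqrt (∑ y, (v y)^2)) := by
        rw [Real.sqrt_mul (by positivity), Real.sqrt_mul (by positivity)]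

end NNIP

namespace NNIP2
open NNIP

variable {n : ℕ}

def idxL (n : ℕ) (i : Fin n) : Fin (2*n) := ⟨(i:ℕ), by have := i.isLt; omega⟩
def idxR (n : ℕ) (i : Fin n) : Fin (2*n) := ⟨n + (i:ℕ), by have := i.isLt; omega⟩

def Af (n : ℕ) (w : EuclideanSpace ℝ (Fin (2*n))) (x : Fin n → Bool) : ℝ :=
  (∑ i : Fin n, 2 * boolToR (x i) * w (idxL n i)) - ‖w‖^2

def Bf (n : ℕ) (w : EuclideanSpace ℝ (Fin (2*n))) (y : Fin n → Bool) : ℝ :=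
  ∑ i : Fin n, 2 * boolToR (y i) * w (idxR n i)

lemma sum_split (g : Fin (2*n) → ℝ) :
    ∑ j, g j = (∑ i : Fin n, g (idxL n i)) + ∑ i : Fin n, g (idxR n i) := by
  classical
  rw [← Finset.sum_filter_add_sum_filter_not Finset.univ (fun j : Fin (2*n) => (j:ℕ) < n) g]
  congr 1
  · refine (Finset.sum_nbij' (i := fun a : Fin n => idxL n a)
      (j := fun a : Fin (2*n) => (⟨(a:ℕ) % n, Nat.mod_lt _ (by have := a.isLt; omega)⟩ : Fin n))
      ?_ ?_ ?_ ?_ ?_).symm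
    · intro a _; simp [idxL]
    · intro a ha; exact Finset.mem_univ _
    · intro a _
      ext
      simp [idxL, Nat.mod_eq_of_lt a.isLt]
    · intro a ha
      simp at ha
      ext
      simp [idxL, Nat.mod_eq_of_lt ha]
    · intro a _; rfl
  · refine (Finset.sum_nbij' (i := fun a : Fin n => idxR n a)
      (j := fun a : Fin (2*n) => (⟨((a:ℕ) - n) % n, Nat.mod_lt _ (by have := a.isLt; omega)⟩ : Fin n))
      ?_ ?_ ?_ ?_ ?_).symm
    · intro a _
      simp [idxR]
    · intro a ha; exact Finset.mem_univ _
    · intro a _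
      ext
      simp [idxR, Nat.mod_eq_of_lt a.isLt]
    · intro a ha
      simp at ha
      have h2 : (a:ℕ) - n < n := by have := a.isLt; omega
      ext
      simp [idxR, Nat.mod_eq_of_lt h2]
      omega
    · intro a _; rfl

lemma toPoint_join_L (x y : Fin n → Bool) (i : Fin n) :
    toPoint (join n x y) (idxL n i) = boolToR (x i) := by
  show boolToR (join n x y (idxL n i)) = boolToR (x i)
  congr 1
  simp only [join, idxL]
  simp

lemma toPoint_join_R (x y : Fin n → Bool) (i : Fin n) :
    toPoint (join n x y) (idxR n i) = boolToR (y i) := by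
  show boolToR (join n x y (idxR n i)) = boolToR (y i)
  congr 1
  simp only [join, idxR]
  simp

lemma dist_sq_eq (x y : Fin n → Bool) (w : EuclideanSpace ℝ (Fin (2*n))) :
    dist (toPoint (join n x y)) w ^ 2
      = ‖toPoint (join n x y)‖^2 - (Af n w x + Bf n w y) := by
  rw [dist_eq_norm, norm_sub_sq_real]
  have hinner : (inner ℝ (toPoint (join n x y)) w : ℝ)
      = ∑ j, toPoint (join n x y) j * w j := by
    simp [PiLp.inner_apply, RCLike.inner_apply, conj_trivial, mul_comm]
  rw [hinner, sum_split (fun j => toPoint (join n x y) j * w j)]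
  have hL : ∑ i : Fin n, toPoint (join n x y) (idxL n i) * w (idxL n i)
      = ∑ i : Fin n, boolToR (x i) * w (idxL n i) :=
    Finset.sum_congr rfl (fun i _ => by rw [toPoint_join_L])
  have hR : ∑ i : Fin n, toPoint (join n x y) (idxR n i) * w (idxR n i)
      = ∑ i : Fin n, boolToR (y i) * w (idxR n i) :=
    Finset.sum_congr rfl (fun i _ => by rw [toPoint_join_R])
  rw [hL, hR]
  have e1 : (∑ i : Fin n, 2 * boolToR (x i) * w (idxL n i))
      = 2 * ∑ i : Fin n, boolToR (x i) * w (idxL n i) := by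
    rw [Finset.mul_sum]
    exact Finset.sum_congr rfl fun i _ => by ring
  have e2 : (∑ i : Fin n, 2 * boolToR (y i) * w (idxR n i))
      = 2 * ∑ i : Fin n, boolToR (y i) * w (idxR n i) := by
    rw [Finset.mul_sum]
    exact Finset.sum_congr rfl fun i _ => by ring
  simp only [Af, Bf]
  rw [e1, e2]
  ring

lemma dist_lt_dist_iff (x y : Fin n → Bool) (b c : EuclideanSpace ℝ (Fin (2*n))) :
    dist (toPoint (join n x y)) b < dist (toPoint (join n x y)) c
      ↔ Af n c x + Bf n c y < Af n b x + Bf n b y := by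
  rw [← pow_lt_pow_iff_left₀ dist_nonneg dist_nonneg two_ne_zero,
      dist_sq_eq x y b, dist_sq_eq x y c]
  constructor <;> intro h <;> linarith

end NNIP2

namespace NNIP3
open NNIP NNIP2

variable {n : ℕ}

lemma chi_of_IP_true {x y : Fin n → Bool} (h : IP n (join n x y) = true) :
    chi n x y = -1 := by
  rw [IP_join] at h
  have hodd : Odd (cnt n x y) := of_decide_eq_true h
  rw [chi]
  exact Odd.neg_one_pow hodd

lemma chi_of_IP_false {x y : Fin n → Bool} (h : IP n (join n x y) = false) :
    chi n x y = 1 := by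
  rw [IP_join] at h
  have hodd : ¬ Odd (cnt n x y) := of_decide_eq_false h
  rw [chi]
  exact Even.neg_one_pow (Nat.not_odd_iff_even.1 hodd)

section Rep

variable (n)
variable (P N : Finset (EuclideanSpace ℝ (Fin (2*n))))

lemma rep_nonempty (hn : 0 < n) (hrep : IsNNRep (IP n) P N) :
    P.Nonempty ∧ N.Nonempty := by
  constructor
  · -- use the input x1 = e_0 joined with itself, where IP = true
    set x1 : Fin n → Bool := fun i => decide ((i:ℕ) = 0) with hx1
    have hcnt : cnt n x1 x1 = 1 := by
      rw [cnt]
      have : (Finset.univ.filter fun i : Fin n => x1 i = true ∧ x1 i = true)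
          = {(⟨0, hn⟩ : Fin n)} := by
        ext i
        simp [hx1, Fin.ext_iff]
      rw [this, Finset.card_singleton]
    have hIP : IP n (join n x1 x1) = true := by
      rw [IP_join, hcnt]
      decide
    obtain ⟨b, hb, -⟩ := (hrep.2 (join n x1 x1)).1 hIP
    exact ⟨b, hb⟩
  · set x0 : Fin n → Bool := fun _ => false with hx0
    have hcnt : cnt n x0 x0 = 0 := by
      rw [cnt]
      convert Finset.card_empty
      ext i
      simp [hx0]
    have hIP : IP n (join n x0 x0) = false := by
      rw [IP_join, hcnt]
      decide
    obtain ⟨b, hb, -⟩ := (hrep.2 (join n x0 x0)).2 hIP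
    exact ⟨b, hb⟩

/-- maximum of the affine functions over a nonempty finset -/
def supL (Q : Finset (EuclideanSpace ℝ (Fin (2*n)))) (hQ : Q.Nonempty)
    (x y : Fin n → Bool) : ℝ :=
  Q.sup' hQ (fun w => Af n w x + Bf n w y)

lemma le_supL {Q : Finset (EuclideanSpace ℝ (Fin (2*n)))} (hQ : Q.Nonempty)
    {w : EuclideanSpace ℝ (Fin (2*n))} (hw : w ∈ Q) (x y : Fin n → Bool) :
    Af n w x + Bf n w y ≤ supL n Q hQ x y := by
  rw [supL]
  exact Finset.le_sup' (fun w => Af n w x + Bf n w y) hw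

lemma exists_supL {Q : Finset (EuclideanSpace ℝ (Fin (2*n)))} (hQ : Q.Nonempty)
    (x y : Fin n → Bool) :
    ∃ b ∈ Q, supL n Q hQ x y = Af n b x + Bf n b y := by
  rw [supL]
  exact Finset.exists_mem_eq_sup' hQ _

/-- the margin of the representation -/
def delta (hP : P.Nonempty) (hN : N.Nonempty) : ℝ :=
  Finset.inf' Finset.univ Finset.univ_nonempty
    (fun p : (Fin n → Bool) × (Fin n → Bool) =>
      if IP n (join n p.1 p.2) = true
      then supL n P hP p.1 p.2 - supL n N hN p.1 p.2
      else supL n N hN p.1 p.2 - supL n P hP p.1 p.2)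

lemma delta_pos (hP : P.Nonempty) (hN : N.Nonempty) (hrep : IsNNRep (IP n) P N) :
    0 < delta n P N hP hN := by
  rw [delta, Finset.lt_inf'_iff]
  rintro ⟨x, y⟩ -
  by_cases hIP : IP n (join n x y) = true
  · rw [if_pos hIP]
    obtain ⟨b, hbP, hb⟩ := (hrep.2 (join n x y)).1 hIP
    have hlt : ∀ c ∈ N, Af n c x + Bf n c y < Af n b x + Bf n b y := by
      intro c hc
      exact (dist_lt_dist_iff x y b c).1 (hb c hc)
    have h1 : supL n N hN x y < Af n b x + Bf n b y := by
      rw [supL, Finset.sup'_lt_iff]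
      exact hlt
    have h2 : Af n b x + Bf n b y ≤ supL n P hP x y := le_supL n hP hbP x y
    linarith
  · rw [if_neg hIP]
    have hIP' : IP n (join n x y) = false := by
      cases h : IP n (join n x y)
      · rfl
      · exact absurd h hIP
    obtain ⟨b, hbN, hb⟩ := (hrep.2 (join n x y)).2 hIP'
    have hlt : ∀ c ∈ P, Af n c x + Bf n c y < Af n b x + Bf n b y := by
      intro c hc
      exact (dist_lt_dist_iff x y b c).1 (hb c hc)
    have h1 : supL n P hP x y < Af n b x + Bf n b y := by
      rw [supL, Finset.sup'_lt_iff]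
      exact hlt
    have h2 : Af n b x + Bf n b y ≤ supL n N hN x y := le_supL n hN hbN x y
    linarith

lemma delta_le (hP : P.Nonempty) (hN : N.Nonempty) (x y : Fin n → Bool) :
    delta n P N hP hN ≤ (if IP n (join n x y) = true
      then supL n P hP x y - supL n N hN x y
      else supL n N hN x y - supL n P hP x y) :=
  Finset.inf'_le _ (Finset.mem_univ (x, y))

/-- sign of a prototype -/
def eps (w : EuclideanSpace ℝ (Fin (2*n))) : ℝ := if w ∈ P then 1 else -1

/-- the signed exponential sum -/
def Mfun (β : ℝ) (x y : Fin n → Bool) : ℝ :=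
  ∑ w ∈ P ∪ N, eps n P w * Real.exp (β * (Af n w x + Bf n w y))

lemma Mfun_split (hrep : IsNNRep (IP n) P N) (β : ℝ) (x y : Fin n → Bool) :
    Mfun n P N β x y
      = (∑ w ∈ P, Real.exp (β * (Af n w x + Bf n w y)))
        - ∑ w ∈ N, Real.exp (β * (Af n w x + Bf n w y)) := by
  rw [Mfun, Finset.sum_union hrep.1]
  congr 1
  · apply Finset.sum_congr rfl
    intro w hw
    rw [eps, if_pos hw, one_mul]
  · rw [← Finset.sum_neg_distrib]
    apply Finset.sum_congr rfl
    intro w hw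
    have hwP : w ∉ P := Finset.disjoint_right.1 hrep.1 hw
    rw [eps, if_neg hwP]
    ring

set_option maxHeartbeats 600000 in
/-- The key margin estimate. -/
lemma margin (hP : P.Nonempty) (hN : N.Nonempty) (hrep : IsNNRep (IP n) P N)
    {β : ℝ} (hβ : 0 < β)
    (hη : ((P ∪ N).card : ℝ) * Real.exp (-(β * delta n P N hP hN)) ≤ 1)
    (x y : Fin n → Bool) (w0 : EuclideanSpace ℝ (Fin (2*n))) (hw0 : w0 ∈ P ∪ N) :
    (1 - ((P ∪ N).card : ℝ) * Real.exp (-(β * delta n P N hP hN)))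
        * Real.exp (β * (Af n w0 x + Bf n w0 y))
      ≤ (-(chi n x y)) * Mfun n P N β x y := by
  obtain ⟨δ, hδdef⟩ : ∃ d, delta n P N hP hN = d := ⟨_, rfl⟩
  rw [hδdef] at hη ⊢
  have hδpos : 0 < δ := hδdef ▸ delta_pos n P N hP hN hrep
  obtain ⟨η, hηdef⟩ : ∃ e, ((P ∪ N).card : ℝ) * Real.exp (-(β * δ)) = e := ⟨_, rfl⟩
  rw [hηdef] at hη ⊢
  have hηnn : 0 ≤ η := by
    rw [← hηdef]
    positivity
  -- symmetric core argument
  have core : ∀ (Q R : Finset (EuclideanSpace ℝ (Fin (2*n)))) (hQ : Q.Nonempty)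
      (hR : R.Nonempty),
      R.card ≤ (P ∪ N).card →
      supL n R hR x y ≤ supL n Q hQ x y - δ →
      (∀ w ∈ P ∪ N, Af n w x + Bf n w y ≤ supL n Q hQ x y) →
      (1 - η) * Real.exp (β * (Af n w0 x + Bf n w0 y))
        ≤ (∑ w ∈ Q, Real.exp (β * (Af n w x + Bf n w y)))
          - ∑ w ∈ R, Real.exp (β * (Af n w x + Bf n w y)) := by
    intro Q R hQ hR hcard hgap hbound
    obtain ⟨b, hbQ, hb⟩ := exists_supL n hQ x y
    rw [hb] at hgap hbound
    have h1 : Real.exp (β * (Af n b x + Bf n b y))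
        ≤ ∑ w ∈ Q, Real.exp (β * (Af n w x + Bf n w y)) :=
      Finset.single_le_sum (f := fun w => Real.exp (β * (Af n w x + Bf n w y)))
        (fun w _ => (Real.exp_pos _).le) hbQ
    have h2 : ∑ w ∈ R, Real.exp (β * (Af n w x + Bf n w y))
        ≤ (R.card : ℝ) * Real.exp (β * ((Af n b x + Bf n b y) - δ)) := by
      calc ∑ w ∈ R, Real.exp (β * (Af n w x + Bf n w y))
          ≤ ∑ _w ∈ R, Real.exp (β * ((Af n b x + Bf n b y) - δ)) := by
            apply Finset.sum_le_sum
            intro w hw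
            apply Real.exp_le_exp.2
            apply mul_le_mul_of_nonneg_left _ hβ.le
            calc Af n w x + Bf n w y ≤ supL n R hR x y := le_supL n hR hw x y
              _ ≤ (Af n b x + Bf n b y) - δ := hgap
        _ = (R.card : ℝ) * Real.exp (β * ((Af n b x + Bf n b y) - δ)) := by
            rw [Finset.sum_const, nsmul_eq_mul]
    have h3 : (R.card : ℝ) * Real.exp (β * ((Af n b x + Bf n b y) - δ))
        ≤ η * Real.exp (β * (Af n b x + Bf n b y)) := by
      rw [← hηdef]
      have he : Real.exp (β * ((Af n b x + Bf n b y) - δ))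
          = Real.exp (-(β * δ)) * Real.exp (β * (Af n b x + Bf n b y)) := by
        rw [← Real.exp_add]
        congr 1
        ring
      rw [he]
      have hcast : ((R.card : ℝ)) ≤ (((P ∪ N).card : ℝ)) := by exact_mod_cast hcard
      have hprod : (0:ℝ) ≤ Real.exp (-(β * δ)) * Real.exp (β * (Af n b x + Bf n b y)) := by
        positivity
      calc (R.card : ℝ) * (Real.exp (-(β * δ)) * Real.exp (β * (Af n b x + Bf n b y)))
          ≤ ((P ∪ N).card : ℝ) * (Real.exp (-(β * δ)) * Real.exp (β * (Af n b x + Bf n b y))) :=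
            mul_le_mul_of_nonneg_right hcast hprod
        _ = ((P ∪ N).card : ℝ) * Real.exp (-(β * δ)) * Real.exp (β * (Af n b x + Bf n b y)) := by
            ring
    have h4 : Real.exp (β * (Af n w0 x + Bf n w0 y))
        ≤ Real.exp (β * (Af n b x + Bf n b y)) := by
      apply Real.exp_le_exp.2
      exact mul_le_mul_of_nonneg_left (hbound w0 hw0) hβ.le
    have h5 : (1 - η) * Real.exp (β * (Af n w0 x + Bf n w0 y))
        ≤ (1 - η) * Real.exp (β * (Af n b x + Bf n b y)) := by
      apply mul_le_mul_of_nonneg_left h4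
      linarith
    have h6 := le_trans h2 h3
    have h7 : (1 - η) * Real.exp (β * (Af n b x + Bf n b y))
        = Real.exp (β * (Af n b x + Bf n b y))
          - η * Real.exp (β * (Af n b x + Bf n b y)) := by ring
    linarith
  by_cases hIP : IP n (join n x y) = true
  · rw [chi_of_IP_true hIP, Mfun_split n P N hrep, neg_neg, one_mul]
    have hgap : supL n N hN x y ≤ supL n P hP x y - δ := by
      have := delta_le n P N hP hN x y
      rw [if_pos hIP] at this
      linarith
    refine core P N hP hN (Finset.card_le_card Finset.subset_union_right) hgap ?_
    intro w hw
    rcases Finset.mem_union.1 hw with h | h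
    · exact le_supL n hP h x y
    · calc Af n w x + Bf n w y ≤ supL n N hN x y := le_supL n hN h x y
        _ ≤ supL n P hP x y - δ := hgap
        _ ≤ supL n P hP x y := by linarith
  · have hIP' : IP n (join n x y) = false := by
      cases h : IP n (join n x y)
      · rfl
      · exact absurd h hIP
    rw [chi_of_IP_false hIP', Mfun_split n P N hrep]
    have hgap : supL n P hP x y ≤ supL n N hN x y - δ := by
      have := delta_le n P N hP hN x y
      rw [if_neg hIP] at this
      linarith
    have hcore := core N P hN hP (Finset.card_le_card Finset.subset_union_left) hgap ?_
    · rw [neg_one_mul, neg_sub]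
      exact hcore
    · intro w hw
      rcases Finset.mem_union.1 hw with h | h
      · calc Af n w x + Bf n w y ≤ supL n P hP x y := le_supL n hP h x y
          _ ≤ supL n N hN x y - δ := hgap
          _ ≤ supL n N hN x y := by linarith
      · exact le_supL n hN h x y

end Rep
end NNIP3

namespace NNIP4
open NNIP NNIP2 NNIP3

/-- index type of prototypes -/
abbrev Kt (n : ℕ) (P N : Finset (EuclideanSpace ℝ (Fin (2*n)))) :=
  {w : EuclideanSpace ℝ (Fin (2*n)) // w ∈ P ∪ N}

variable (n : ℕ) (P N : Finset (EuclideanSpace ℝ (Fin (2*n)))) (β : ℝ)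

def Rden (s : Kt n P N → ℝ) (x : Fin n → Bool) : ℝ :=
  ∑ w : Kt n P N, Real.exp (2*β*(Af n w.1 x + s w))

def Sden (s : Kt n P N → ℝ) (y : Fin n → Bool) : ℝ :=
  ∑ w : Kt n P N, Real.exp (2*β*(Bf n w.1 y - s w))

def Phi (s : Kt n P N → ℝ) : ℝ :=
  (∑ x : Fin n → Bool, Real.log (Rden n P N β s x))
    + ∑ y : Fin n → Bool, Real.log (Sden n P N β s y)

def Psi (s : Kt n P N → ℝ) : ℝ := Phi n P N β s + (∑ w : Kt n P N, s w)^2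

def aw (s : Kt n P N → ℝ) (w : Kt n P N) : ℝ :=
  ∑ x : Fin n → Bool, Real.exp (2*β*(Af n w.1 x + s w)) / Rden n P N β s x

def bw (s : Kt n P N → ℝ) (w : Kt n P N) : ℝ :=
  ∑ y : Fin n → Bool, Real.exp (2*β*(Bf n w.1 y - s w)) / Sden n P N β s y

variable {n P N β}

section Basic

lemma Rden_pos (hK : Nonempty (Kt n P N)) (s : Kt n P N → ℝ) (x : Fin n → Bool) : 0 < Rden n P N β s x := by
  have := hK
  apply Finset.sum_pos (fun w _ => Real.exp_pos _) Finset.univ_nonempty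

lemma Sden_pos (hK : Nonempty (Kt n P N)) (s : Kt n P N → ℝ) (y : Fin n → Bool) : 0 < Sden n P N β s y := by
  have := hK
  apply Finset.sum_pos (fun w _ => Real.exp_pos _) Finset.univ_nonempty

lemma aw_pos (hK : Nonempty (Kt n P N)) (s : Kt n P N → ℝ) (w : Kt n P N) : 0 < aw n P N β s w := by
  apply Finset.sum_pos (fun x _ => div_pos (Real.exp_pos _) (Rden_pos hK s x))
  exact Finset.univ_nonempty

lemma bw_pos (hK : Nonempty (Kt n P N)) (s : Kt n P N → ℝ) (w : Kt n P N) : 0 < bw n P N β s w := by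
  apply Finset.sum_pos (fun y _ => div_pos (Real.exp_pos _) (Sden_pos hK s y))
  exact Finset.univ_nonempty

lemma sum_aw (hK : Nonempty (Kt n P N)) (s : Kt n P N → ℝ) : ∑ w : Kt n P N, aw n P N β s w = 2^n := by
  simp only [aw]
  rw [Finset.sum_comm]
  have h1 : ∀ x : Fin n → Bool,
      ∑ w : Kt n P N, Real.exp (2*β*(Af n w.1 x + s w)) / Rden n P N β s x = 1 := by
    intro x
    rw [← Finset.sum_div, ← Rden]
    exact div_self (Rden_pos hK s x).ne'
  rw [Finset.sum_congr rfl (fun x _ => h1 x), Finset.sum_const, card_bool_fun]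
  simp

lemma sum_bw (hK : Nonempty (Kt n P N)) (s : Kt n P N → ℝ) : ∑ w : Kt n P N, bw n P N β s w = 2^n := by
  simp only [bw]
  rw [Finset.sum_comm]
  have h1 : ∀ y : Fin n → Bool,
      ∑ w : Kt n P N, Real.exp (2*β*(Bf n w.1 y - s w)) / Sden n P N β s y = 1 := by
    intro y
    rw [← Finset.sum_div, ← Sden]
    exact div_self (Sden_pos hK s y).ne'
  rw [Finset.sum_congr rfl (fun y _ => h1 y), Finset.sum_const, card_bool_fun]
  simp

lemma Psi_continuous (hK : Nonempty (Kt n P N)) : Continuous (Psi n P N β) := by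
  have hR : ∀ x : Fin n → Bool, Continuous (fun s : Kt n P N → ℝ => Rden n P N β s x) := by
    intro x
    apply continuous_finset_sum
    intro w _
    exact Real.continuous_exp.comp (continuous_const.mul (continuous_const.add
      (continuous_apply w)))
  have hS : ∀ y : Fin n → Bool, Continuous (fun s : Kt n P N → ℝ => Sden n P N β s y) := by
    intro y
    apply continuous_finset_sum
    intro w _
    exact Real.continuous_exp.comp (continuous_const.mul (continuous_const.sub
      (continuous_apply w)))
  apply Continuous.add
  · apply Continuous.add
    · apply continuous_finset_sum
      intro x _
      exact Continuous.log (hR x) (fun s => (Rden_pos hK s x).ne')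
    · apply continuous_finset_sum
      intro y _
      exact Continuous.log (hS y) (fun s => (Sden_pos hK s y).ne')
  · exact (continuous_finset_sum _ (fun w _ => continuous_apply w)).pow 2

end Basic

/-- the uniform constant -/
noncomputable def C0 (hK : Nonempty (Kt n P N)) : ℝ :=
  Finset.inf' Finset.univ (Finset.univ_nonempty)
    (fun p : Kt n P N × Kt n P N =>
      (∑ x : Fin n → Bool, Af n p.1.1 x) + ∑ y : Fin n → Bool, Bf n p.2.1 y)

lemma key_lb (hK : Nonempty (Kt n P N)) (hβ : 0 < β) (s : Kt n P N → ℝ) (w w' : Kt n P N) :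
    2*β*((2^n) * (s w - s w')) + 2*β*(C0 hK) ≤ Phi n P N β s := by
  have hx : ∀ x : Fin n → Bool, 2*β*(Af n w.1 x + s w) ≤ Real.log (Rden n P N β s x) := by
    intro x
    rw [Real.le_log_iff_exp_le (Rden_pos hK s x)]
    exact Finset.single_le_sum (f := fun w : Kt n P N => Real.exp (2*β*(Af n w.1 x + s w)))
      (fun v _ => (Real.exp_pos _).le) (Finset.mem_univ w)
  have hy : ∀ y : Fin n → Bool, 2*β*(Bf n w'.1 y - s w') ≤ Real.log (Sden n P N β s y) := by
    intro y
    rw [Real.le_log_iff_exp_le (Sden_pos hK s y)]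
    exact Finset.single_le_sum (f := fun v : Kt n P N => Real.exp (2*β*(Bf n v.1 y - s v)))
      (fun v _ => (Real.exp_pos _).le) (Finset.mem_univ w')
  have hX : ∑ x : Fin n → Bool, 2*β*(Af n w.1 x + s w)
      ≤ ∑ x : Fin n → Bool, Real.log (Rden n P N β s x) :=
    Finset.sum_le_sum (fun x _ => hx x)
  have hY : ∑ y : Fin n → Bool, 2*β*(Bf n w'.1 y - s w')
      ≤ ∑ y : Fin n → Bool, Real.log (Sden n P N β s y) :=
    Finset.sum_le_sum (fun y _ => hy y)
  have eX : ∑ x : Fin n → Bool, 2*β*(Af n w.1 x + s w)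
      = 2*β*(∑ x : Fin n → Bool, Af n w.1 x) + 2*β*(2^n)*(s w) := by
    rw [← Finset.mul_sum, Finset.sum_add_distrib, Finset.sum_const, card_bool_fun]
    push_cast
    ring
  have eY : ∑ y : Fin n → Bool, 2*β*(Bf n w'.1 y - s w')
      = 2*β*(∑ y : Fin n → Bool, Bf n w'.1 y) - 2*β*(2^n)*(s w') := by
    rw [← Finset.mul_sum, Finset.sum_sub_distrib, Finset.sum_const, card_bool_fun]
    push_cast
    ring
  have hC : C0 hK ≤ (∑ x : Fin n → Bool, Af n w.1 x) + ∑ y : Fin n → Bool, Bf n w'.1 y :=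
    Finset.inf'_le _ (Finset.mem_univ (w, w'))
  rw [Phi]
  have := add_le_add hX hY
  rw [eX, eY] at this
  nlinarith [this, mul_le_mul_of_nonneg_left hC (by positivity : (0:ℝ) ≤ 2*β)]

end NNIP4

namespace NNIP4
open NNIP NNIP2 NNIP3

variable {n : ℕ} {P N : Finset (EuclideanSpace ℝ (Fin (2*n)))} {β : ℝ}

lemma Phi_zero_eq : Psi n P N β 0 = Phi n P N β 0 := by
  rw [Psi]
  simp

lemma sublevel (hK : Nonempty (Kt n P N)) (hβ : 0 < β) :
    ∃ T : ℝ, 0 ≤ T ∧ ∀ s, Psi n P N β s ≤ Psi n P N β 0 → ∀ w, |s w| ≤ T := by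
  have w₀ : Kt n P N := Classical.choice hK
  set D : ℝ := Psi n P N β 0 - 2*β*(C0 hK) with hDdef
  have hD : 0 ≤ D := by
    have := key_lb hK hβ 0 w₀ w₀
    simp only [Pi.zero_apply, sub_self, mul_zero, zero_add] at this
    rw [hDdef, Phi_zero_eq]
    linarith
  have hpow : (0:ℝ) < 2^n := by positivity
  have hden : (0:ℝ) < 2*β*2^n := by positivity
  set D2 : ℝ := D / (2*β*2^n) with hD2def
  have hD2 : 0 ≤ D2 := div_nonneg hD hden.le
  have hD2' : D2 * (2*β*2^n) = D := div_mul_cancel₀ _ hden.ne'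
  refine ⟨D2 + Real.sqrt D, by positivity, ?_⟩
  intro s hs w
  have hPhiPsi : Phi n P N β s ≤ Psi n P N β s := by
    rw [Psi]
    nlinarith [sq_nonneg (∑ w : Kt n P N, s w)]
  have f1 : ∀ w w' : Kt n P N, s w - s w' ≤ D2 := by
    intro w w'
    have hkey := key_lb hK hβ s w w'
    have h1 : (s w - s w') * (2*β*2^n) ≤ D := by nlinarith
    rw [← hD2'] at h1
    exact le_of_mul_le_mul_right h1 hden
  have hPhi0 : 2*β*(C0 hK) ≤ Phi n P N β s := by
    have := key_lb hK hβ s w₀ w₀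
    simp only [sub_self, mul_zero, zero_add] at this
    linarith
  have f2 : |∑ w' : Kt n P N, s w'| ≤ Real.sqrt D := by
    have hsq : (∑ w' : Kt n P N, s w')^2 ≤ D := by
      rw [hDdef]
      have : Psi n P N β s = Phi n P N β s + (∑ w' : Kt n P N, s w')^2 := rfl
      linarith
    calc |∑ w' : Kt n P N, s w'| = Real.sqrt ((∑ w' : Kt n P N, s w')^2) :=
          (Real.sqrt_sq_eq_abs _).symm
      _ ≤ Real.sqrt D := Real.sqrt_le_sqrt hsq
  set m : ℕ := Fintype.card (Kt n P N) with hmdef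
  have hm1 : 1 ≤ (m:ℝ) := by
    have : 0 < m := Fintype.card_pos
    exact_mod_cast this
  have hmpos : (0:ℝ) < m := by linarith
  have habs := abs_le.1 f2
  have hup : ∀ v v' : Kt n P N, (m:ℝ) * s v - ∑ w' : Kt n P N, s w' ≤ m * D2 := by
    intro v v'
    have hsum : ∑ w' : Kt n P N, (s v - s w') ≤ ∑ _w' : Kt n P N, D2 :=
      Finset.sum_le_sum (fun w' _ => f1 v w')
    rw [Finset.sum_sub_distrib, Finset.sum_const, Finset.sum_const, Finset.card_univ,
      ← hmdef, nsmul_eq_mul, nsmul_eq_mul] at hsum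
    linarith
  have hdn : ∀ v v' : Kt n P N, (∑ w' : Kt n P N, s w') - (m:ℝ) * s v ≤ m * D2 := by
    intro v v'
    have hsum : ∑ w' : Kt n P N, (s w' - s v) ≤ ∑ _w' : Kt n P N, D2 :=
      Finset.sum_le_sum (fun w' _ => f1 w' v)
    rw [Finset.sum_sub_distrib, Finset.sum_const, Finset.sum_const, Finset.card_univ,
      ← hmdef, nsmul_eq_mul, nsmul_eq_mul] at hsum
    linarith
  have hsqrtD : 0 ≤ Real.sqrt D := Real.sqrt_nonneg _
  rw [abs_le]
  constructor
  · have h1 := hdn w w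
    have : (m:ℝ) * (-(D2 + Real.sqrt D)) ≤ m * s w := by nlinarith
    exact le_of_mul_le_mul_left this hmpos
  · have h1 := hup w w
    have : (m:ℝ) * s w ≤ m * (D2 + Real.sqrt D) := by nlinarith
    exact le_of_mul_le_mul_left this hmpos

lemma exists_global_min (hK : Nonempty (Kt n P N)) (hβ : 0 < β) :
    ∃ s₀ : Kt n P N → ℝ, ∀ s, Psi n P N β s₀ ≤ Psi n P N β s := by
  obtain ⟨T, hT0, hT⟩ := sublevel hK hβ
  set B : Set (Kt n P N → ℝ) := Set.univ.pi (fun _ => Set.Icc (-(T+1)) (T+1)) with hBdef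
  have hBc : IsCompact B := isCompact_univ_pi (fun _ => isCompact_Icc)
  have h0B : (0 : Kt n P N → ℝ) ∈ B := by
    rw [hBdef, Set.mem_univ_pi]
    intro w
    have h0 : (0 : Kt n P N → ℝ) w = 0 := rfl
    rw [Set.mem_Icc, h0]
    constructor <;> linarith
  obtain ⟨s₀, hs₀B, hmin⟩ := hBc.exists_isMinOn ⟨0, h0B⟩
    ((Psi_continuous hK).continuousOn)
  refine ⟨s₀, fun s => ?_⟩
  by_cases hs : s ∈ B
  · exact isMinOn_iff.1 hmin s hs
  · have h1 : Psi n P N β s₀ ≤ Psi n P N β 0 := isMinOn_iff.1 hmin 0 h0B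
    have h2 : ¬ (Psi n P N β s ≤ Psi n P N β 0) := by
      intro hc
      apply hs
      rw [hBdef, Set.mem_univ_pi]
      intro w
      have h3 := abs_le.1 (hT s hc w)
      rw [Set.mem_Icc]
      constructor
      · linarith [h3.1]
      · linarith [h3.2]
    linarith [not_le.1 h2]

lemma Phi_shift (hK : Nonempty (Kt n P N)) (s : Kt n P N → ℝ) (c : ℝ) :
    Phi n P N β (fun w => s w + c) = Phi n P N β s := by
  have hR : ∀ x, Rden n P N β (fun w => s w + c) x
      = Real.exp (2*β*c) * Rden n P N β s x := by
    intro x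
    rw [Rden, Rden, Finset.mul_sum]
    apply Finset.sum_congr rfl
    intro w _
    rw [← Real.exp_add]
    congr 1
    ring
  have hS : ∀ y, Sden n P N β (fun w => s w + c) y
      = Real.exp (-(2*β*c)) * Sden n P N β s y := by
    intro y
    rw [Sden, Sden, Finset.mul_sum]
    apply Finset.sum_congr rfl
    intro w _
    rw [← Real.exp_add]
    congr 1
    ring
  rw [Phi, Phi]
  have e1 : ∀ x : Fin n → Bool, Real.log (Rden n P N β (fun w => s w + c) x)
      = 2*β*c + Real.log (Rden n P N β s x) := by
    intro x
    rw [hR x, Real.log_mul (Real.exp_pos _).ne' (Rden_pos hK s x).ne', Real.log_exp]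
  have e2 : ∀ y : Fin n → Bool, Real.log (Sden n P N β (fun w => s w + c) y)
      = -(2*β*c) + Real.log (Sden n P N β s y) := by
    intro y
    rw [hS y, Real.log_mul (Real.exp_pos _).ne' (Sden_pos hK s y).ne', Real.log_exp]
  rw [Finset.sum_congr rfl (fun x _ => e1 x), Finset.sum_congr rfl (fun y _ => e2 y),
    Finset.sum_add_distrib, Finset.sum_add_distrib, Finset.sum_const, Finset.sum_const,
    card_bool_fun]
  ring

lemma sum_update_eq (s : Kt n P N → ℝ) (w : Kt n P N) (t : ℝ) :
    ∑ w' : Kt n P N, Function.update s w (s w + t) w' = (∑ w' : Kt n P N, s w') + t := by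
  rw [Finset.sum_update_of_mem (Finset.mem_univ w), Finset.sdiff_singleton_eq_erase,
    ← Finset.add_sum_erase Finset.univ s (Finset.mem_univ w)]
  ring

lemma line_min (hK : Nonempty (Kt n P N)) (hβ : 0 < β) (s₀ : Kt n P N → ℝ)
    (hmin : ∀ s, Psi n P N β s₀ ≤ Psi n P N β s) (w : Kt n P N) (t : ℝ) :
    Phi n P N β s₀ ≤ Phi n P N β (Function.update s₀ w (s₀ w + t)) := by
  set m : ℕ := Fintype.card (Kt n P N) with hmdef
  have hmpos : (0:ℝ) < m := by
    have : 0 < m := Fintype.card_pos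
    exact_mod_cast this
  set u : Kt n P N → ℝ := Function.update s₀ w (s₀ w + t) with hudef
  have inv := Phi_shift (β := β) hK u (-(t/(m:ℝ)))
  have hsumv : ∑ w' : Kt n P N, (u w' + (-(t/(m:ℝ)))) = ∑ w' : Kt n P N, s₀ w' := by
    rw [Finset.sum_add_distrib, Finset.sum_const, Finset.card_univ, ← hmdef, hudef,
      sum_update_eq]
    have : (m:ℝ) ≠ 0 := hmpos.ne'
    rw [nsmul_eq_mul, mul_neg, mul_div_cancel₀ _ this]
    ring
  have hcmp := hmin (fun w' => u w' + (-(t/(m:ℝ))))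
  rw [Psi, Psi, inv, hsumv] at hcmp
  linarith

lemma secant (hK : Nonempty (Kt n P N)) (hβ : 0 < β) (s : Kt n P N → ℝ)
    (w : Kt n P N)
    (hlm : ∀ t, Phi n P N β s ≤ Phi n P N β (Function.update s w (s w + t)))
    (u : ℝ) (hu : 0 < u) :
    0 ≤ aw n P N β s w * (u - 1) + bw n P N β s w * (1/u - 1) := by
  set t : ℝ := Real.log u / (2*β) with htdef
  have h2β : (2*β) ≠ 0 := by positivity
  have hut : Real.exp (2*β*t) = u := by
    rw [htdef, mul_div_cancel₀ _ h2β, Real.exp_log hu]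
  have hut' : Real.exp (-(2*β*t)) = 1/u := by
    rw [Real.exp_neg, hut]
    exact (one_div u).symm
  set s' : Kt n P N → ℝ := Function.update s w (s w + t) with hs'def
  -- x side
  have hRu : ∀ x, Rden n P N β s' x
      = Rden n P N β s x + Real.exp (2*β*(Af n w.1 x + s w)) * (u - 1) := by
    intro x
    rw [Rden, Rden, ← Finset.add_sum_erase Finset.univ _ (Finset.mem_univ w),
      ← Finset.add_sum_erase Finset.univ
        (fun v : Kt n P N => Real.exp (2*β*(Af n v.1 x + s v))) (Finset.mem_univ w)]
    have hrest : ∑ v ∈ Finset.univ.erase w, Real.exp (2*β*(Af n v.1 x + s' v))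
        = ∑ v ∈ Finset.univ.erase w, Real.exp (2*β*(Af n v.1 x + s v)) := by
      apply Finset.sum_congr rfl
      intro v hv
      rw [hs'def, Function.update_of_ne (Finset.mem_erase.1 hv).1]
    rw [hrest, hs'def, Function.update_self]
    have : Real.exp (2*β*(Af n w.1 x + (s w + t)))
        = Real.exp (2*β*(Af n w.1 x + s w)) * u := by
      rw [← hut, ← Real.exp_add]
      congr 1
      ring
    rw [this]
    ring
  have hSu : ∀ y, Sden n P N β s' y
      = Sden n P N β s y + Real.exp (2*β*(Bf n w.1 y - s w)) * (1/u - 1) := by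
    intro y
    rw [Sden, Sden, ← Finset.add_sum_erase Finset.univ _ (Finset.mem_univ w),
      ← Finset.add_sum_erase Finset.univ
        (fun v : Kt n P N => Real.exp (2*β*(Bf n v.1 y - s v))) (Finset.mem_univ w)]
    have hrest : ∑ v ∈ Finset.univ.erase w, Real.exp (2*β*(Bf n v.1 y - s' v))
        = ∑ v ∈ Finset.univ.erase w, Real.exp (2*β*(Bf n v.1 y - s v)) := by
      apply Finset.sum_congr rfl
      intro v hv
      rw [hs'def, Function.update_of_ne (Finset.mem_erase.1 hv).1]
    rw [hrest, hs'def, Function.update_self]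
    have : Real.exp (2*β*(Bf n w.1 y - (s w + t)))
        = Real.exp (2*β*(Bf n w.1 y - s w)) * (1/u) := by
      rw [← hut', ← Real.exp_add]
      congr 1
      ring
    rw [this]
    ring
  have hxlog : ∀ x, Real.log (Rden n P N β s' x) - Real.log (Rden n P N β s x)
      ≤ (Real.exp (2*β*(Af n w.1 x + s w)) / Rden n P N β s x) * (u - 1) := by
    intro x
    have hpos1 : 0 < Rden n P N β s' x := Rden_pos hK s' x
    have hpos2 : 0 < Rden n P N β s x := Rden_pos hK s x
    rw [← Real.log_div hpos1.ne' hpos2.ne']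
    calc Real.log (Rden n P N β s' x / Rden n P N β s x)
        ≤ Rden n P N β s' x / Rden n P N β s x - 1 :=
          Real.log_le_sub_one_of_pos (div_pos hpos1 hpos2)
      _ = (Real.exp (2*β*(Af n w.1 x + s w)) / Rden n P N β s x) * (u - 1) := by
          rw [hRu x]
          field_simp
          ring
  have hylog : ∀ y, Real.log (Sden n P N β s' y) - Real.log (Sden n P N β s y)
      ≤ (Real.exp (2*β*(Bf n w.1 y - s w)) / Sden n P N β s y) * (1/u - 1) := by
    intro y
    have hpos1 : 0 < Sden n P N β s' y := Sden_pos hK s' y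
    have hpos2 : 0 < Sden n P N β s y := Sden_pos hK s y
    rw [← Real.log_div hpos1.ne' hpos2.ne']
    calc Real.log (Sden n P N β s' y / Sden n P N β s y)
        ≤ Sden n P N β s' y / Sden n P N β s y - 1 :=
          Real.log_le_sub_one_of_pos (div_pos hpos1 hpos2)
      _ = (Real.exp (2*β*(Bf n w.1 y - s w)) / Sden n P N β s y) * (1/u - 1) := by
          rw [hSu y]
          field_simp
          ring
  have hXsum : ∑ x : Fin n → Bool,
        (Real.log (Rden n P N β s' x) - Real.log (Rden n P N β s x))
      ≤ aw n P N β s w * (u - 1) := by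
    calc ∑ x : Fin n → Bool, (Real.log (Rden n P N β s' x) - Real.log (Rden n P N β s x))
        ≤ ∑ x : Fin n → Bool,
            (Real.exp (2*β*(Af n w.1 x + s w)) / Rden n P N β s x) * (u - 1) :=
          Finset.sum_le_sum (fun x _ => hxlog x)
      _ = aw n P N β s w * (u - 1) := by
          rw [aw, ← Finset.sum_mul]
  have hYsum : ∑ y : Fin n → Bool,
        (Real.log (Sden n P N β s' y) - Real.log (Sden n P N β s y))
      ≤ bw n P N β s w * (1/u - 1) := by
    calc ∑ y : Fin n → Bool, (Real.log (Sden n P N β s' y) - Real.log (Sden n P N β s y))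
        ≤ ∑ y : Fin n → Bool,
            (Real.exp (2*β*(Bf n w.1 y - s w)) / Sden n P N β s y) * (1/u - 1) :=
          Finset.sum_le_sum (fun y _ => hylog y)
      _ = bw n P N β s w * (1/u - 1) := by
          rw [bw, ← Finset.sum_mul]
  have hline := hlm t
  rw [Phi, Phi] at hline
  rw [Finset.sum_sub_distrib] at hXsum hYsum
  linarith

theorem exists_balanced (hK : Nonempty (Kt n P N)) (hβ : 0 < β) :
    ∃ s : Kt n P N → ℝ, ∀ w, aw n P N β s w = bw n P N β s w := by
  obtain ⟨s₀, hmin⟩ := exists_global_min hK hβ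
  refine ⟨s₀, fun w => ?_⟩
  have hlm : ∀ t, Phi n P N β s₀ ≤ Phi n P N β (Function.update s₀ w (s₀ w + t)) :=
    fun t => line_min hK hβ s₀ hmin w t
  have hsec := secant hK hβ s₀ w hlm
  have hapos : 0 < aw n P N β s₀ w := aw_pos hK s₀ w
  have hbpos : 0 < bw n P N β s₀ w := bw_pos hK s₀ w
  set p : ℝ := Real.sqrt (aw n P N β s₀ w) with hpdef
  set q : ℝ := Real.sqrt (bw n P N β s₀ w) with hqdef
  have hppos : 0 < p := Real.sqrt_pos.2 hapos
  have hqpos : 0 < q := Real.sqrt_pos.2 hbpos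
  have hap : p^2 = aw n P N β s₀ w := Real.sq_sqrt hapos.le
  have hbq : q^2 = bw n P N β s₀ w := Real.sq_sqrt hbpos.le
  have h := hsec (q/p) (div_pos hqpos hppos)
  rw [← hap, ← hbq] at h
  have h3 : p^2*(q/p - 1) + q^2*(1/(q/p) - 1) = -((p - q)^2) := by
    field_simp
    ring
  rw [h3] at h
  have h4 : (p - q)^2 = 0 := le_antisymm (by linarith) (sq_nonneg _)
  have h5 : p = q := by
    have := pow_eq_zero_iff (n := 2) (by norm_num) |>.1 h4
    linarith [sub_eq_zero.1 this]
  rw [← hap, ← hbq, h5]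

end NNIP4

namespace NNIP5
open NNIP NNIP2 NNIP3 NNIP4

lemma Mfun_attach (n : ℕ) (P N : Finset (EuclideanSpace ℝ (Fin (2*n)))) (β : ℝ)
    (x y : Fin n → Bool) :
    Mfun n P N β x y
      = ∑ w : Kt n P N, eps n P w.1 * Real.exp (β*(Af n w.1 x + Bf n w.1 y)) := by
  rw [Mfun, Finset.univ_eq_attach, Finset.sum_attach (P ∪ N)
    (fun w => eps n P w * Real.exp (β*(Af n w x + Bf n w y)))]

lemma abs_eps (n : ℕ) (P : Finset (EuclideanSpace ℝ (Fin (2*n))))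
    (w : EuclideanSpace ℝ (Fin (2*n))) : |eps n P w| = 1 := by
  rw [eps]
  by_cases h : w ∈ P <;> simp [h]

theorem main_claim (n : ℕ) (P N : Finset (EuclideanSpace ℝ (Fin (2*n))))
    (hrep : IsNNRep (IP n) P N) (hP : P.Nonempty) (hN : N.Nonempty)
    {β : ℝ} (hβ : 0 < β)
    (hη : ((P ∪ N).card : ℝ) * Real.exp (-(β * delta n P N hP hN)) ≤ 1) :
    (1 - ((P ∪ N).card : ℝ) * Real.exp (-(β * delta n P N hP hN))) * ((2:ℝ)^n)^2
      ≤ ((P ∪ N).card : ℝ) * (Real.sqrt (2^n) * 2^n) := by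
  classical
  have hK : Nonempty (Kt n P N) := ⟨⟨hP.choose, Finset.mem_union_left _ hP.choose_spec⟩⟩
  set η : ℝ := ((P ∪ N).card : ℝ) * Real.exp (-(β * delta n P N hP hN)) with hηdef
  have hηnn : 0 ≤ η := by positivity
  have h1η : 0 ≤ 1 - η := by linarith
  obtain ⟨s, hbal⟩ := exists_balanced hK hβ
  -- normalized factors
  set φ : Kt n P N → (Fin n → Bool) → ℝ :=
    fun w x => Real.exp (β*(Af n w.1 x + s w)) / Real.sqrt (Rden n P N β s x) with hφdef
  set ψ : Kt n P N → (Fin n → Bool) → ℝ :=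
    fun w y => Real.exp (β*(Bf n w.1 y - s w)) / Real.sqrt (Sden n P N β s y) with hψdef
  have hRpos : ∀ x, 0 < Rden n P N β s x := fun x => Rden_pos hK s x
  have hSpos : ∀ y, 0 < Sden n P N β s y := fun y => Sden_pos hK s y
  have hsqRpos : ∀ x, 0 < Real.sqrt (Rden n P N β s x) :=
    fun x => Real.sqrt_pos.2 (hRpos x)
  have hsqSpos : ∀ y, 0 < Real.sqrt (Sden n P N β s y) :=
    fun y => Real.sqrt_pos.2 (hSpos y)
  have hφnn : ∀ w x, 0 ≤ φ w x := fun w x => by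
    rw [hφdef]
    positivity
  have hψnn : ∀ w y, 0 ≤ ψ w y := fun w y => by
    rw [hψdef]
    positivity
  have hφ2 : ∀ w x, (φ w x)^2 = Real.exp (2*β*(Af n w.1 x + s w)) / Rden n P N β s x := by
    intro w x
    rw [hφdef, div_pow, Real.sq_sqrt (hRpos x).le, sq, ← Real.exp_add]
    congr 2
    ring
  have hψ2 : ∀ w y, (ψ w y)^2 = Real.exp (2*β*(Bf n w.1 y - s w)) / Sden n P N β s y := by
    intro w y
    rw [hψdef, div_pow, Real.sq_sqrt (hSpos y).le, sq, ← Real.exp_add]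
    congr 2
    ring
  have hsumφ2x : ∀ w, ∑ x : Fin n → Bool, (φ w x)^2 = aw n P N β s w := by
    intro w
    rw [aw]
    exact Finset.sum_congr rfl (fun x _ => hφ2 w x)
  have hsumψ2y : ∀ w, ∑ y : Fin n → Bool, (ψ w y)^2 = bw n P N β s w := by
    intro w
    rw [bw]
    exact Finset.sum_congr rfl (fun y _ => hψ2 w y)
  have hsumφ2w : ∀ x, ∑ w : Kt n P N, (φ w x)^2 = 1 := by
    intro x
    rw [Finset.sum_congr rfl (fun w _ => hφ2 w x), ← Finset.sum_div, ← Rden]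
    exact div_self (hRpos x).ne'
  have hsumψ2w : ∀ y, ∑ w : Kt n P N, (ψ w y)^2 = 1 := by
    intro y
    rw [Finset.sum_congr rfl (fun w _ => hψ2 w y), ← Finset.sum_div, ← Sden]
    exact div_self (hSpos y).ne'
  have hsumφψ : ∀ x y, ∑ w : Kt n P N, φ w x * ψ w y ≤ 1 := by
    intro x y
    have hcs := Finset.sum_mul_sq_le_sq_mul_sq Finset.univ (fun w => φ w x) (fun w => ψ w y)
    rw [hsumφ2w x, hsumψ2w y, one_mul] at hcs
    have hnn : 0 ≤ ∑ w : Kt n P N, φ w x * ψ w y :=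
      Finset.sum_nonneg (fun w _ => mul_nonneg (hφnn w x) (hψnn w y))
    nlinarith
  -- pointwise claim
  have claim_pt : ∀ x y, (1-η) * (∑ w : Kt n P N, (φ w x)^2 * (ψ w y)^2)
      ≤ (-(chi n x y)) * (∑ w : Kt n P N, eps n P w.1 * (φ w x * ψ w y)) := by
    intro x y
    obtain ⟨wst, -, hwst⟩ := Finset.exists_max_image Finset.univ
      (fun w : Kt n P N => φ w x * ψ w y) Finset.univ_nonempty
    have hstnn : 0 ≤ φ wst x * ψ wst y := mul_nonneg (hφnn wst x) (hψnn wst y)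
    have h1 : ∑ w : Kt n P N, (φ w x)^2 * (ψ w y)^2 ≤ φ wst x * ψ wst y := by
      calc ∑ w : Kt n P N, (φ w x)^2 * (ψ w y)^2
          ≤ ∑ w : Kt n P N, (φ wst x * ψ wst y) * (φ w x * ψ w y) := by
            apply Finset.sum_le_sum
            intro w _
            have e : (φ w x)^2 * (ψ w y)^2 = (φ w x * ψ w y) * (φ w x * ψ w y) := by ring
            rw [e]
            exact mul_le_mul_of_nonneg_right (hwst w (Finset.mem_univ w))
              (mul_nonneg (hφnn w x) (hψnn w y))
        _ = (φ wst x * ψ wst y) * ∑ w : Kt n P N, φ w x * ψ w y := by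
            rw [Finset.mul_sum]
        _ ≤ (φ wst x * ψ wst y) * 1 := by
            exact mul_le_mul_of_nonneg_left (hsumφψ x y) hstnn
        _ = φ wst x * ψ wst y := mul_one _
    have hmarg := margin n P N hP hN hrep hβ hη x y wst.1 wst.2
    have hRS : 0 < Real.sqrt (Rden n P N β s x) * Real.sqrt (Sden n P N β s y) :=
      mul_pos (hsqRpos x) (hsqSpos y)
    have hid : (φ wst x * ψ wst y)
        * (Real.sqrt (Rden n P N β s x) * Real.sqrt (Sden n P N β s y))
        = Real.exp (β * (Af n wst.1 x + Bf n wst.1 y)) := by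
      rw [hφdef, hψdef]
      field_simp
      rw [div_eq_iff hRS.ne']
      rw [show Real.exp (β * (Af n wst.1 x + Bf n wst.1 y)) = Real.exp (β * (Af n wst.1 x + s wst)) * Real.exp (β * (Bf n wst.1 y - s wst)) by rw [← Real.exp_add]; congr 1; ring]
      ring
    have hMid : ∑ w : Kt n P N, eps n P w.1 * (φ w x * ψ w y)
        = Mfun n P N β x y
          / (Real.sqrt (Rden n P N β s x) * Real.sqrt (Sden n P N β s y)) := by
      rw [Mfun_attach, Finset.sum_div]
      apply Finset.sum_congr rfl
      intro w _
      rw [hφdef, hψdef, div_mul_div_comm, ← Real.exp_add, mul_div_assoc]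
      congr 3
      ring
    rw [hMid, ← mul_div_assoc]
    rw [le_div_iff₀ hRS]
    calc (1-η) * (∑ w : Kt n P N, (φ w x)^2 * (ψ w y)^2)
        * (Real.sqrt (Rden n P N β s x) * Real.sqrt (Sden n P N β s y))
        ≤ (1-η) * (φ wst x * ψ wst y)
          * (Real.sqrt (Rden n P N β s x) * Real.sqrt (Sden n P N β s y)) := by
          apply mul_le_mul_of_nonneg_right _ hRS.le
          exact mul_le_mul_of_nonneg_left h1 h1η
      _ = (1-η) * Real.exp (β * (Af n wst.1 x + Bf n wst.1 y)) := by
          rw [mul_assoc, hid]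
      _ ≤ (-(chi n x y)) * Mfun n P N β x y := hmarg
  -- sum the pointwise claim
  have total_lhs : ∑ x : Fin n → Bool, ∑ y : Fin n → Bool,
      (∑ w : Kt n P N, (φ w x)^2 * (ψ w y)^2)
      = ∑ w : Kt n P N, aw n P N β s w * bw n P N β s w := by
    have h1 : ∀ x : Fin n → Bool, ∑ y : Fin n → Bool, ∑ w : Kt n P N,
        (φ w x)^2 * (ψ w y)^2 = ∑ w : Kt n P N, ∑ y : Fin n → Bool,
        (φ w x)^2 * (ψ w y)^2 := fun x => Finset.sum_comm
    rw [Finset.sum_congr rfl (fun x _ => h1 x), Finset.sum_comm]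
    apply Finset.sum_congr rfl
    intro w _
    rw [← hsumφ2x w, ← hsumψ2y w, Finset.sum_mul_sum]
  have total_rhs : ∑ x : Fin n → Bool, ∑ y : Fin n → Bool,
      (-(chi n x y)) * (∑ w : Kt n P N, eps n P w.1 * (φ w x * ψ w y))
      = ∑ w : Kt n P N,
          (-(eps n P w.1)) * (∑ x : Fin n → Bool, ∑ y : Fin n → Bool,
            chi n x y * (φ w x * ψ w y)) := by
    have e1 : ∀ x y, (-(chi n x y)) * (∑ w : Kt n P N, eps n P w.1 * (φ w x * ψ w y))
        = ∑ w : Kt n P N, (-(eps n P w.1)) * (chi n x y * (φ w x * ψ w y)) := by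
      intro x y
      rw [Finset.mul_sum]
      apply Finset.sum_congr rfl
      intro w _
      ring
    calc ∑ x : Fin n → Bool, ∑ y : Fin n → Bool,
        (-(chi n x y)) * (∑ w : Kt n P N, eps n P w.1 * (φ w x * ψ w y))
        = ∑ x : Fin n → Bool, ∑ w : Kt n P N, ∑ y : Fin n → Bool,
            (-(eps n P w.1)) * (chi n x y * (φ w x * ψ w y)) := by
          apply Finset.sum_congr rfl
          intro x _
          rw [Finset.sum_congr rfl (fun y _ => e1 x y), Finset.sum_comm]
      _ = ∑ w : Kt n P N, ∑ x : Fin n → Bool, ∑ y : Fin n → Bool,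
            (-(eps n P w.1)) * (chi n x y * (φ w x * ψ w y)) := Finset.sum_comm
      _ = ∑ w : Kt n P N,
          (-(eps n P w.1)) * (∑ x : Fin n → Bool, ∑ y : Fin n → Bool,
            chi n x y * (φ w x * ψ w y)) := by
          apply Finset.sum_congr rfl
          intro w _
          rw [Finset.mul_sum]
          apply Finset.sum_congr rfl
          intro x _
          rw [Finset.mul_sum]
  have hbound : ∑ w : Kt n P N,
        (-(eps n P w.1)) * (∑ x : Fin n → Bool, ∑ y : Fin n → Bool,
          chi n x y * (φ w x * ψ w y))
      ≤ Real.sqrt (2^n) * 2^n := by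
    have hterm : ∀ w : Kt n P N,
        (-(eps n P w.1)) * (∑ x : Fin n → Bool, ∑ y : Fin n → Bool,
          chi n x y * (φ w x * ψ w y))
        ≤ Real.sqrt (2^n) * aw n P N β s w := by
      intro w
      have habs : (-(eps n P w.1)) * (∑ x : Fin n → Bool, ∑ y : Fin n → Bool,
          chi n x y * (φ w x * ψ w y))
          ≤ |∑ x : Fin n → Bool, ∑ y : Fin n → Bool, chi n x y * (φ w x * ψ w y)| := by
        calc (-(eps n P w.1)) * (∑ x : Fin n → Bool, ∑ y : Fin n → Bool,
            chi n x y * (φ w x * ψ w y))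
            ≤ |(-(eps n P w.1)) * (∑ x : Fin n → Bool, ∑ y : Fin n → Bool,
              chi n x y * (φ w x * ψ w y))| := le_abs_self _
          _ = |∑ x : Fin n → Bool, ∑ y : Fin n → Bool,
              chi n x y * (φ w x * ψ w y)| := by
              rw [abs_mul, abs_neg, abs_eps, one_mul]
      have hpb := pairing_bound (fun x => φ w x) (fun y => ψ w y)
      rw [hsumφ2x w, hsumψ2y w, hbal w, Real.mul_self_sqrt (bw_pos hK s w).le] at hpb
      calc (-(eps n P w.1)) * (∑ x : Fin n → Bool, ∑ y : Fin n → Bool,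
          chi n x y * (φ w x * ψ w y))
          ≤ |∑ x : Fin n → Bool, ∑ y : Fin n → Bool, chi n x y * (φ w x * ψ w y)| := habs
        _ ≤ Real.sqrt (2^n) * bw n P N β s w := hpb
        _ = Real.sqrt (2^n) * aw n P N β s w := by rw [hbal w]
    calc ∑ w : Kt n P N, (-(eps n P w.1)) * (∑ x : Fin n → Bool, ∑ y : Fin n → Bool,
          chi n x y * (φ w x * ψ w y))
        ≤ ∑ w : Kt n P N, Real.sqrt (2^n) * aw n P N β s w :=
          Finset.sum_le_sum (fun w _ => hterm w)
      _ = Real.sqrt (2^n) * ∑ w : Kt n P N, aw n P N β s w := by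
          rw [Finset.mul_sum]
      _ = Real.sqrt (2^n) * 2^n := by rw [sum_aw hK s]
  -- put everything together
  have hsum_claim : (1-η) * (∑ w : Kt n P N, aw n P N β s w * bw n P N β s w)
      ≤ Real.sqrt (2^n) * 2^n := by
    calc (1-η) * (∑ w : Kt n P N, aw n P N β s w * bw n P N β s w)
        = ∑ x : Fin n → Bool, ∑ y : Fin n → Bool,
            (1-η) * (∑ w : Kt n P N, (φ w x)^2 * (ψ w y)^2) := by
          rw [← total_lhs, Finset.mul_sum]
          apply Finset.sum_congr rfl
          intro x _
          rw [Finset.mul_sum]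
      _ ≤ ∑ x : Fin n → Bool, ∑ y : Fin n → Bool,
            (-(chi n x y)) * (∑ w : Kt n P N, eps n P w.1 * (φ w x * ψ w y)) := by
          apply Finset.sum_le_sum
          intro x _
          apply Finset.sum_le_sum
          intro y _
          exact claim_pt x y
      _ = ∑ w : Kt n P N,
          (-(eps n P w.1)) * (∑ x : Fin n → Bool, ∑ y : Fin n → Bool,
            chi n x y * (φ w x * ψ w y)) := total_rhs
      _ ≤ Real.sqrt (2^n) * 2^n := hbound
  have hawsq : ∑ w : Kt n P N, aw n P N β s w * bw n P N β s w
      = ∑ w : Kt n P N, (aw n P N β s w)^2 := by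
    apply Finset.sum_congr rfl
    intro w _
    rw [← hbal w]
    ring
  set mK : ℝ := (Fintype.card (Kt n P N) : ℝ) with hmKdef
  have hmKcard : mK = ((P ∪ N).card : ℝ) := by
    rw [hmKdef, Fintype.card_coe]
  have hmKnn : 0 ≤ mK := by positivity
  have hCS : ((2:ℝ)^n)^2 ≤ (∑ w : Kt n P N, (aw n P N β s w)^2) * mK := by
    have := Finset.sum_mul_sq_le_sq_mul_sq Finset.univ
      (fun w : Kt n P N => aw n P N β s w) (fun _ => (1:ℝ))
    simp only [mul_one, one_pow] at this
    rw [sum_aw hK s] at this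
    rw [Finset.sum_const, Finset.card_univ, nsmul_eq_mul, mul_one] at this
    calc ((2:ℝ)^n)^2 ≤ (∑ w : Kt n P N, (aw n P N β s w)^2) * (Fintype.card (Kt n P N)) :=
          this
      _ = (∑ w : Kt n P N, (aw n P N β s w)^2) * mK := by rw [hmKdef]
  have hfin1 : (1-η) * ((2:ℝ)^n)^2 ≤ ((1-η) * ∑ w : Kt n P N, (aw n P N β s w)^2) * mK := by
    calc (1-η) * ((2:ℝ)^n)^2
        ≤ (1-η) * ((∑ w : Kt n P N, (aw n P N β s w)^2) * mK) :=
          mul_le_mul_of_nonneg_left hCS h1η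
      _ = ((1-η) * ∑ w : Kt n P N, (aw n P N β s w)^2) * mK := by ring
  have hfin2 : ((1-η) * ∑ w : Kt n P N, (aw n P N β s w)^2) * mK
      ≤ (Real.sqrt (2^n) * 2^n) * mK := by
    apply mul_le_mul_of_nonneg_right _ hmKnn
    rw [← hawsq]
    exact hsum_claim
  rw [hmKcard] at hfin1 hfin2
  calc (1-η) * ((2:ℝ)^n)^2
      ≤ (Real.sqrt (2^n) * 2^n) * ((P ∪ N).card : ℝ) := le_trans hfin1 hfin2
    _ = ((P ∪ N).card : ℝ) * (Real.sqrt (2^n) * 2^n) := by ring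

end NNIP5

namespace NNIP6
open NNIP NNIP2 NNIP3 NNIP4 NNIP5

theorem main_bound (n : ℕ) (hn : 0 < n) (P N : Finset (EuclideanSpace ℝ (Fin (2*n))))
    (hrep : IsNNRep (IP n) P N) :
    Real.sqrt (2^n) ≤ ((P ∪ N).card : ℝ) := by
  obtain ⟨hP, hN⟩ := rep_nonempty n P N hn hrep
  set m : ℝ := ((P ∪ N).card : ℝ) with hmdef
  have hm1 : 1 ≤ m := by
    have h1 : 0 < P.card := Finset.card_pos.2 hP
    have h2 : P.card ≤ (P ∪ N).card := Finset.card_le_card Finset.subset_union_left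
    have : 1 ≤ (P ∪ N).card := by omega
    rw [hmdef]
    exact_mod_cast this
  have hδpos := delta_pos n P N hP hN hrep
  set δ : ℝ := delta n P N hP hN with hδdef
  have key : ∀ ε : ℝ, 0 < ε → ε ≤ 1 →
      (1-ε) * ((2:ℝ)^n)^2 ≤ m * (Real.sqrt (2^n) * 2^n) := by
    intro ε hε hε1
    have hm0 : 0 < m := by linarith
    set β : ℝ := (Real.log (m/ε) + 1)/δ with hβdef
    have hmε : 1 ≤ m/ε := by
      rw [le_div_iff₀ hε]
      linarith
    have hlognn : 0 ≤ Real.log (m/ε) := Real.log_nonneg hmε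
    have hβpos : 0 < β := by
      rw [hβdef]
      apply div_pos _ hδpos
      linarith
    have hexp : Real.exp (-(β*δ)) = (ε/m) * Real.exp (-1) := by
      rw [hβdef]
      have hc : (Real.log (m/ε) + 1)/δ*δ = Real.log (m/ε) + 1 :=
        div_mul_cancel₀ _ hδpos.ne'
      rw [hc]
      calc Real.exp (-(Real.log (m/ε) + 1))
          = Real.exp (-(Real.log (m/ε))) * Real.exp (-1) := by
            rw [← Real.exp_add]
            congr 1
            ring
        _ = (ε/m) * Real.exp (-1) := by
            rw [Real.exp_neg, Real.exp_log (by positivity : (0:ℝ) < m/ε), inv_div]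
    have hexp1 : Real.exp (-1:ℝ) ≤ 1 := by
      have := Real.exp_le_exp.2 (show (-1:ℝ) ≤ 0 by norm_num)
      rwa [Real.exp_zero] at this
    have hη : m * Real.exp (-(β*δ)) ≤ ε := by
      rw [hexp]
      calc m * ((ε/m)*Real.exp (-1)) = ε * Real.exp (-1) := by field_simp
        _ ≤ ε * 1 := mul_le_mul_of_nonneg_left hexp1 hε.le
        _ = ε := mul_one ε
    have hη1 : m * Real.exp (-(β*δ)) ≤ 1 := le_trans hη hε1
    have hclaim := main_claim n P N hrep hP hN hβpos (by rw [← hδdef, ← hmdef]; exact hη1)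
    rw [← hδdef, ← hmdef] at hclaim
    have hmono : (1-ε) * ((2:ℝ)^n)^2
        ≤ (1 - m*Real.exp (-(β*δ))) * ((2:ℝ)^n)^2 := by
      apply mul_le_mul_of_nonneg_right _ (by positivity)
      linarith
    linarith
  have h2 : ((2:ℝ)^n)^2 ≤ m * (Real.sqrt (2^n) * 2^n) := by
    by_contra hcon
    push_neg at hcon
    set G : ℝ := ((2:ℝ)^n)^2 - m * (Real.sqrt (2^n) * 2^n) with hGdef
    have hG : 0 < G := by rw [hGdef]; linarith
    have hpow2 : (0:ℝ) < ((2:ℝ)^n)^2 := by positivity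
    set ε : ℝ := min 1 (G / (2*((2:ℝ)^n)^2)) with hεdef
    have hε : 0 < ε := lt_min one_pos (by positivity)
    have hε1 : ε ≤ 1 := min_le_left _ _
    have hkey := key ε hε hε1
    have hεb : ε * ((2:ℝ)^n)^2 ≤ G/2 := by
      have hle : ε ≤ G/(2*((2:ℝ)^n)^2) := min_le_right _ _
      calc ε * ((2:ℝ)^n)^2 ≤ (G/(2*((2:ℝ)^n)^2)) * ((2:ℝ)^n)^2 :=
            mul_le_mul_of_nonneg_right hle hpow2.le
        _ = G/2 := by
            field_simp
    nlinarith
  have hsq : Real.sqrt ((2:ℝ)^n) * Real.sqrt ((2:ℝ)^n) = (2:ℝ)^n :=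
    Real.mul_self_sqrt (by positivity)
  by_contra hc
  push_neg at hc
  have hlt : m * (Real.sqrt (2^n) * 2^n) < Real.sqrt (2^n) * (Real.sqrt (2^n) * 2^n) := by
    apply mul_lt_mul_of_pos_right hc
    have h1 : (0:ℝ) < Real.sqrt ((2:ℝ)^n) := Real.sqrt_pos.2 (by positivity)
    have h2 : (0:ℝ) < (2:ℝ)^n := by positivity
    positivity
  have he : Real.sqrt ((2:ℝ)^n) * (Real.sqrt ((2:ℝ)^n) * (2:ℝ)^n) = ((2:ℝ)^n)^2 := by
    rw [← mul_assoc, hsq]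
    ring
  rw [he] at hlt
  linarith

lemma toPoint_injective (d : ℕ) : Function.Injective (toPoint (n := d)) := by
  intro a b h
  funext i
  have h1 : boolToR (a i) = boolToR (b i) := congrArg (fun p : EuclideanSpace ℝ (Fin d) => p i) h
  cases ha : a i <;> cases hb : b i
  · rfl
  · rw [ha, hb] at h1
    norm_num [boolToR] at h1
  · rw [ha, hb] at h1
    norm_num [boolToR] at h1
  · rfl

lemma exists_rep (d : ℕ) (f : (Fin d → Bool) → Bool) :
    ∃ P N : Finset (EuclideanSpace ℝ (Fin d)), IsNNRep f P N := by
  classical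
  refine ⟨(Finset.univ.filter fun a => f a = true).image toPoint,
    (Finset.univ.filter fun a => f a = false).image toPoint, ?_, ?_⟩
  · rw [Finset.disjoint_left]
    rintro p hp hp'
    obtain ⟨a, ha, hae⟩ := Finset.mem_image.1 hp
    obtain ⟨b, hb, hbe⟩ := Finset.mem_image.1 hp'
    have hab : a = b := toPoint_injective d (hae.trans hbe.symm)
    rw [Finset.mem_filter] at ha hb
    rw [hab, hb.2] at ha
    exact absurd ha.2 (by simp)
  · intro a
    constructor
    · intro ha
      refine ⟨toPoint a, Finset.mem_image_of_mem _
        (Finset.mem_filter.2 ⟨Finset.mem_univ _, ha⟩), ?_⟩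
      intro c hc
      obtain ⟨b, hbf, hbe⟩ := Finset.mem_image.1 hc
      rw [Finset.mem_filter] at hbf
      have hab : a ≠ b := by
        intro he
        rw [← he] at hbf
        rw [ha] at hbf
        exact absurd hbf.2 (by simp)
      rw [dist_self]
      apply dist_pos.2
      rw [← hbe]
      exact fun hh => hab (toPoint_injective d hh)
    · intro ha
      refine ⟨toPoint a, Finset.mem_image_of_mem _
        (Finset.mem_filter.2 ⟨Finset.mem_univ _, ha⟩), ?_⟩
      intro c hc
      obtain ⟨b, hbf, hbe⟩ := Finset.mem_image.1 hc
      rw [Finset.mem_filter] at hbf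
      have hab : a ≠ b := by
        intro he
        rw [← he] at hbf
        rw [ha] at hbf
        exact absurd hbf.2 (by simp)
      rw [dist_self]
      apply dist_pos.2
      rw [← hbe]
      exact fun hh => hab (toPoint_injective d hh)

end NNIP6


/-- The nearest neighbor complexity of the mod 2 inner product
function on `2n` variables satisfies `NN(IPₙ) ≥ 2^(n/2)`. -/
theorem NN_IP_lower (n : ℕ) : (2 : ℝ) ^ ((n : ℝ) / 2) ≤ (NN (IP n) : ℝ) := by
  classical
  have hSne : {m | ∃ P N, IsNNRep (IP n) P N ∧ (P ∪ N).card = m}.Nonempty := by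
    obtain ⟨P, N, h⟩ := NNIP6.exists_rep (2*n) (IP n)
    exact ⟨(P ∪ N).card, P, N, h, rfl⟩
  obtain ⟨P, N, hrep, hcard⟩ := Nat.sInf_mem hSne
  have hNNeq : (P ∪ N).card = NN (IP n) := hcard
  rcases Nat.eq_zero_or_pos n with hn0 | hn
  · subst hn0
    simp only [Nat.cast_zero, zero_div, Real.rpow_zero]
    have hNN : 1 ≤ NN (IP 0) := by
      by_contra hcc
      push_neg at hcc
      have h0 : NN (IP 0) = 0 := by omega
      rw [← hNNeq] at h0
      have hPN : P ∪ N = ∅ := Finset.card_eq_zero.1 h0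
      have hIP0 : IP 0 (fun _ => false) = false := by
        rw [IP]
        have hu : (Finset.univ : Finset (Fin 0)) = ∅ := Finset.univ_eq_empty
        rw [hu, Finset.filter_empty, Finset.card_empty]
        decide
      obtain ⟨b, hb, -⟩ := (hrep.2 (fun _ => false)).2 hIP0
      have hbm : b ∈ P ∪ N := Finset.mem_union_right _ hb
      rw [hPN] at hbm
      exact absurd hbm (Finset.notMem_empty b)
    exact_mod_cast hNN
  · have hmb := NNIP6.main_bound n hn P N hrep
    have heq : (2:ℝ)^((n:ℝ)/2) = Real.sqrt ((2:ℝ)^n) := by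
      rw [Real.sqrt_eq_rpow, ← Real.rpow_natCast 2 n,
        ← Real.rpow_mul (by norm_num : (0:ℝ) ≤ 2)]
      congr 1
      ring
    rw [heq]
    calc Real.sqrt ((2:ℝ)^n) ≤ ((P ∪ N).card : ℝ) := hmb
      _ = (NN (IP n) : ℝ) := by exact_mod_cast hNNeq
end
end

section
/- The nearest neighbor complexity of the n-variable parity function satisfies NN(x₁ ⊕ … ⊕ xₙ) ≥ n + 1. -/
open Finset

noncomputable section

/-- The parity function `x₁ ⊕ x₂ ⊕ ⋯ ⊕ xₙ`. -/
def parity (n : ℕ) (x : Fin n → Bool) : Bool := decide (Odd (wt x))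

/-! ### Auxiliary material for the lower bound -/

/-- Validity of an anchor system `(P, N)` for the Boolean function `g` on the face of the
cube with free coordinates `F` and base point `σ`. -/
def NNValid {n : ℕ} (g : (Fin n → Bool) → Bool)
    (P N : Finset (EuclideanSpace ℝ (Fin n)))
    (F : Finset (Fin n)) (σ : Fin n → Bool) : Prop :=
  ∀ a : Fin n → Bool, (∀ i ∉ F, a i = σ i) →
    ((g a = true → ∃ b ∈ P, ∀ c ∈ N, dist (toPoint a) b < dist (toPoint a) c) ∧
     (g a = false → ∃ b ∈ N, ∀ c ∈ P, dist (toPoint a) b < dist (toPoint a) c))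

lemma nnvalid_swap {n : ℕ} {g : (Fin n → Bool) → Bool}
    {P N : Finset (EuclideanSpace ℝ (Fin n))} {F : Finset (Fin n)} {σ : Fin n → Bool}
    (h : NNValid g P N F σ) : NNValid (fun a => !(g a)) N P F σ := by
  intro a ha
  obtain ⟨h1, h2⟩ := h a ha
  constructor
  · intro hg; exact h2 (by simpa using hg)
  · intro hg; exact h1 (by simpa using hg)

lemma distSq {n : ℕ} (x y : EuclideanSpace ℝ (Fin n)) :
    dist x y ^ 2 = ∑ i, (x i - y i) ^ 2 := by
  rw [EuclideanSpace.dist_eq, Real.sq_sqrt (by positivity)]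
  exact Finset.sum_congr rfl fun i _ => by rw [Real.dist_eq, sq_abs]

/-- Key coordinate lemma: if `q` is closer to `a` than `p`, but `p` is closer to `a'`
than `q`, where `a'` is `a` with coordinate `d` flipped from `false` to `true`, then
`q` has a smaller `d`-th coordinate than `p`. -/
lemma key_coord {n : ℕ} {a a' : Fin n → Bool} {d : Fin n}
    (had : a d = false) (ha' : ∀ i, a' i = Function.update a d true i)
    {p q : EuclideanSpace ℝ (Fin n)}
    (h1 : dist (toPoint a) q < dist (toPoint a) p)
    (h2 : dist (toPoint a') p < dist (toPoint a') q) :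
    q d < p d := by
  have hq2 : dist (toPoint a) q ^ 2 < dist (toPoint a) p ^ 2 := by
    have h0 : (0:ℝ) ≤ dist (toPoint a) q := dist_nonneg
    nlinarith
  have hp2 : dist (toPoint a') p ^ 2 < dist (toPoint a') q ^ 2 := by
    have h0 : (0:ℝ) ≤ dist (toPoint a') p := dist_nonneg
    nlinarith
  rw [distSq, distSq] at hq2 hp2
  have hsplit : ∀ (b : Fin n → Bool) (z : EuclideanSpace ℝ (Fin n)),
      ∑ i, (toPoint b i - z i) ^ 2
        = (toPoint b d - z d) ^ 2 + ∑ i ∈ Finset.univ.erase d, (toPoint b i - z i) ^ 2 :=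
    fun b z => (Finset.add_sum_erase Finset.univ _ (Finset.mem_univ d)).symm
  have hco : ∀ z : EuclideanSpace ℝ (Fin n),
      ∑ i ∈ Finset.univ.erase d, (toPoint a i - z i) ^ 2
        = ∑ i ∈ Finset.univ.erase d, (toPoint a' i - z i) ^ 2 := by
    intro z
    refine Finset.sum_congr rfl fun i hi => ?_
    have hid : i ≠ d := (Finset.mem_erase.1 hi).1
    have hai : a' i = a i := by rw [ha' i, Function.update_of_ne hid]
    simp only [toPoint, WithLp.ofLp_toLp, hai]
  have hA : toPoint a d = 0 := by simp [toPoint, boolToR, had]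
  have hA' : toPoint a' d = 1 := by
    have : a' d = true := by rw [ha' d, Function.update_self]
    simp [toPoint, boolToR, this]
  rw [hsplit a q, hsplit a p, hA] at hq2
  rw [hsplit a' p, hsplit a' q, hA', ← hco p, ← hco q] at hp2
  nlinarith [hq2, hp2]

lemma wt_update_true {n : ℕ} (a : Fin n → Bool) (d : Fin n) (had : a d = false) :
    wt (Function.update a d true) = wt a + 1 := by
  unfold wt
  have hfil : Finset.univ.filter (fun i => Function.update a d true i = true)
      = insert d (Finset.univ.filter fun i => a i = true) := by
    ext i
    by_cases hid : i = d
    · subst hid; simp [Function.update_self]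
    · simp [Function.update_of_ne hid, hid]
  rw [hfil, Finset.card_insert_of_notMem (by simp [had])]

lemma parity_flip {n : ℕ} (a : Fin n → Bool) (d : Fin n) :
    parity n (Function.update a d (!(a d))) = !(parity n a) := by
  cases had : a d with
  | false =>
      simp only [Bool.not_false]
      have h2 := wt_update_true a d had
      unfold parity
      rw [h2]
      rcases Nat.even_or_odd (wt a) with he | ho
      · rw [decide_eq_true (Even.add_one he), decide_eq_false (Nat.not_odd_iff_even.2 he)]
        rfl
      · rw [decide_eq_false (Nat.not_odd_iff_even.2 (Odd.add_one ho)), decide_eq_true ho]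
        rfl
  | true =>
      simp only [Bool.not_true]
      have hb : Function.update a d false d = false := Function.update_self d false a
      have hup : Function.update (Function.update a d false) d true = a := by
        funext i
        by_cases hid : i = d
        · subst hid; simp [Function.update_self, had]
        · simp [Function.update_of_ne hid]
      have h2 := wt_update_true (Function.update a d false) d hb
      rw [hup] at h2
      unfold parity
      rw [h2]
      rcases Nat.even_or_odd (wt (Function.update a d false)) with he | ho
      · rw [decide_eq_false (Nat.not_odd_iff_even.2 he), decide_eq_true (Even.add_one he)]
        rfl
      · rw [decide_eq_true ho, decide_eq_false (Nat.not_odd_iff_even.2 (Odd.add_one ho))]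
        rfl

/-- If `q ∈ P` has maximal `d`-th coordinate among all anchors, then it can be removed
from a valid system, at the cost of fixing the coordinate `d` to `false`. -/
lemma erase_step {n : ℕ} {g : (Fin n → Bool) → Bool}
    (hflip : ∀ a (e : Fin n), g (Function.update a e (!(a e))) = !(g a))
    {P N : Finset (EuclideanSpace ℝ (Fin n))} {F : Finset (Fin n)} {σ : Fin n → Bool}
    {d : Fin n} (hd : d ∈ F)
    (hval : NNValid g P N F σ)
    {q : EuclideanSpace ℝ (Fin n)} (hqP : q ∈ P)
    (hmax : ∀ r ∈ P ∪ N, r d ≤ q d) :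
    NNValid g (P.erase q) N (F.erase d) (Function.update σ d false) := by
  intro a ha
  have hadf : a d = false := by
    have h := ha d (Finset.notMem_erase d F)
    rwa [Function.update_self] at h
  have haF : ∀ i ∉ F, a i = σ i := by
    intro i hiF
    have hid : i ≠ d := fun h => hiF (h ▸ hd)
    have h := ha i (fun hmem => hiF (Finset.mem_of_mem_erase hmem))
    rwa [Function.update_of_ne hid] at h
  obtain ⟨h1, h2⟩ := hval a haF
  constructor
  · intro hga
    obtain ⟨b, hbP, hb⟩ := h1 hga
    refine ⟨b, Finset.mem_erase.2 ⟨?_, hbP⟩, hb⟩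
    intro hbq
    rw [hbq] at hb
    -- now `q` is a valid witness at `a`; flip d to get a contradiction with maximality
    have hga' : g (Function.update a d true) = false := by
      have h := hflip a d
      rw [hadf] at h
      simp only [Bool.not_false] at h
      rw [h, hga]
      rfl
    have ha'F : ∀ i ∉ F, Function.update a d true i = σ i := by
      intro i hiF
      have hid : i ≠ d := fun h => hiF (h ▸ hd)
      rw [Function.update_of_ne hid]
      exact haF i hiF
    obtain ⟨w, hwN, hw⟩ := (hval _ ha'F).2 hga'
    have hlt : q d < w d := key_coord hadf (fun i => rfl) (hb w hwN) (hw q hqP)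
    exact absurd hlt (not_lt.2 (hmax w (Finset.mem_union_right _ hwN)))
  · intro hga
    obtain ⟨b, hbN, hb⟩ := h2 hga
    exact ⟨b, hbN, fun c hc => hb c (Finset.mem_of_mem_erase hc)⟩

/-- Main lower bound: a valid system on a `k`-dimensional face needs at least `k+1`
anchors, provided `g` flips under every single-coordinate flip. -/
lemma face_bound {n : ℕ} : ∀ (k : ℕ) (g : (Fin n → Bool) → Bool),
    (∀ a (e : Fin n), g (Function.update a e (!(a e))) = !(g a)) →
    ∀ (F : Finset (Fin n)) (σ : Fin n → Bool)
      (P N : Finset (EuclideanSpace ℝ (Fin n))),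
      Disjoint P N → F.card = k → NNValid g P N F σ → k + 1 ≤ (P ∪ N).card := by
  intro k
  induction k with
  | zero =>
      intro g hflip F σ P N hdisj hFcard hval
      obtain ⟨h1, h2⟩ := hval σ (fun i _ => rfl)
      have hne : (P ∪ N).Nonempty := by
        cases hgσ : g σ with
        | true =>
            obtain ⟨b, hbP, -⟩ := h1 hgσ
            exact ⟨b, Finset.mem_union_left _ hbP⟩
        | false =>
            obtain ⟨b, hbN, -⟩ := h2 hgσ
            exact ⟨b, Finset.mem_union_right _ hbN⟩
      simpa using Finset.card_pos.2 hne
  | succ k ih =>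
      intro g hflip F σ P N hdisj hFcard hval
      have hFne : F.Nonempty := Finset.card_pos.1 (by omega)
      obtain ⟨d, hd⟩ := hFne
      obtain ⟨h1, h2⟩ := hval σ (fun i _ => rfl)
      have hne : (P ∪ N).Nonempty := by
        cases hgσ : g σ with
        | true =>
            obtain ⟨b, hbP, -⟩ := h1 hgσ
            exact ⟨b, Finset.mem_union_left _ hbP⟩
        | false =>
            obtain ⟨b, hbN, -⟩ := h2 hgσ
            exact ⟨b, Finset.mem_union_right _ hbN⟩
      obtain ⟨q, hqmem, hqmax⟩ := Finset.exists_max_image (P ∪ N) (fun r => r d) hne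
      have hcard' : (F.erase d).card = k := by
        have h := Finset.card_erase_of_mem hd
        omega
      cases Finset.mem_union.1 hqmem with
      | inl hqP =>
          have hstep := erase_step hflip hd hval hqP hqmax
          have hdisj' : Disjoint (P.erase q) N :=
            hdisj.mono_left (Finset.erase_subset _ _)
          have hIH := ih g hflip (F.erase d) (Function.update σ d false)
            (P.erase q) N hdisj' hcard' hstep
          have hq_notN : q ∉ N := Finset.disjoint_left.1 hdisj hqP
          have hunion : (P.erase q) ∪ N = (P ∪ N).erase q := by
            ext x
            simp only [Finset.mem_union, Finset.mem_erase]
            constructor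
            · rintro (⟨hxq, hxP⟩ | hxN)
              · exact ⟨hxq, Or.inl hxP⟩
              · exact ⟨fun h => hq_notN (h ▸ hxN), Or.inr hxN⟩
            · rintro ⟨hxq, hx | hx⟩
              · exact Or.inl ⟨hxq, hx⟩
              · exact Or.inr hx
          rw [hunion] at hIH
          have hcae := Finset.card_erase_add_one hqmem
          omega
      | inr hqN =>
          have hval' : NNValid (fun a => !(g a)) N P F σ := nnvalid_swap hval
          have hflip' : ∀ a (e : Fin n),
              (fun a => !(g a)) (Function.update a e (!(a e))) = !((fun a => !(g a)) a) := by
            intro a e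
            simp only
            rw [hflip]
          have hmax' : ∀ r ∈ N ∪ P, r d ≤ q d := by
            intro r hr
            exact hqmax r (by rwa [Finset.union_comm] at hr)
          have hstep := erase_step hflip' hd hval' hqN hmax'
          have hdisj' : Disjoint (N.erase q) P :=
            hdisj.symm.mono_left (Finset.erase_subset _ _)
          have hIH := ih (fun a => !(g a)) hflip' (F.erase d) (Function.update σ d false)
            (N.erase q) P hdisj' hcard' hstep
          have hq_notP : q ∉ P := Finset.disjoint_right.1 hdisj hqN
          have hunion : (N.erase q) ∪ P = (P ∪ N).erase q := by
            ext x
            simp only [Finset.mem_union, Finset.mem_erase]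
            constructor
            · rintro (⟨hxq, hxN⟩ | hxP)
              · exact ⟨hxq, Or.inr hxN⟩
              · exact ⟨fun h => hq_notP (h ▸ hxP), Or.inl hxP⟩
            · rintro ⟨hxq, hx | hx⟩
              · exact Or.inr hx
              · exact Or.inl ⟨hxq, hx⟩
          rw [hunion] at hIH
          have hcae := Finset.card_erase_add_one hqmem
          omega

lemma toPoint_inj {n : ℕ} {a b : Fin n → Bool} (h : toPoint a = toPoint b) : a = b := by
  funext i
  have hi : boolToR (a i) = boolToR (b i) := congrFun (congrArg WithLp.ofLp h) i
  cases hab : a i <;> cases hbb : b i <;> rw [hab, hbb] at hi <;>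
    simp [boolToR] at hi ⊢

lemma exists_rep (n : ℕ) : ∃ P N, IsNNRep (parity n) P N := by
  classical
  refine ⟨(Finset.univ.filter fun a : Fin n → Bool => parity n a = true).image toPoint,
          (Finset.univ.filter fun a : Fin n → Bool => parity n a = false).image toPoint,
          ?_, ?_⟩
  · rw [Finset.disjoint_left]
    rintro x hx1 hx2
    obtain ⟨a, ha, rfl⟩ := Finset.mem_image.1 hx1
    obtain ⟨b, hb, hba⟩ := Finset.mem_image.1 hx2
    have hab : b = a := toPoint_inj hba
    rw [Finset.mem_filter] at ha hb
    rw [hab] at hb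
    rw [ha.2] at hb
    exact Bool.noConfusion hb.2
  · intro a
    constructor
    · intro hpa
      refine ⟨toPoint a,
        Finset.mem_image_of_mem toPoint (Finset.mem_filter.2 ⟨Finset.mem_univ _, hpa⟩), ?_⟩
      intro c hc
      obtain ⟨b, hb, rfl⟩ := Finset.mem_image.1 hc
      rw [Finset.mem_filter] at hb
      have hne : toPoint a ≠ toPoint b := by
        intro h
        rw [toPoint_inj h, hb.2] at hpa
        exact Bool.noConfusion hpa
      rw [dist_self]
      exact dist_pos.2 hne
    · intro hpa
      refine ⟨toPoint a,
        Finset.mem_image_of_mem toPoint (Finset.mem_filter.2 ⟨Finset.mem_univ _, hpa⟩), ?_⟩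
      intro c hc
      obtain ⟨b, hb, rfl⟩ := Finset.mem_image.1 hc
      rw [Finset.mem_filter] at hb
      have hne : toPoint a ≠ toPoint b := by
        intro h
        rw [toPoint_inj h, hb.2] at hpa
        exact Bool.noConfusion hpa
      rw [dist_self]
      exact dist_pos.2 hne

/-- The nearest neighbor complexity of the `n`-variable parity
function satisfies `NN(x₁ ⊕ ⋯ ⊕ xₙ) ≥ n + 1`. -/
theorem NN_parity_lower (n : ℕ) : n + 1 ≤ NN (parity n) := by
  obtain ⟨P₀, N₀, hrep₀⟩ := exists_rep n
  have hSne : {m | ∃ P N, IsNNRep (parity n) P N ∧ (P ∪ N).card = m}.Nonempty :=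
    ⟨(P₀ ∪ N₀).card, P₀, N₀, hrep₀, rfl⟩
  have hmem : NN (parity n) ∈ {m | ∃ P N, IsNNRep (parity n) P N ∧ (P ∪ N).card = m} :=
    Nat.sInf_mem hSne
  obtain ⟨P, N, hrep, hcard⟩ := hmem
  rw [← hcard]
  have hval : NNValid (parity n) P N Finset.univ (fun _ => false) :=
    fun a _ => hrep.2 a
  have hbound := face_bound n (parity n) (fun a d => parity_flip a d)
    Finset.univ (fun _ => false) P N hrep.1 (by simp) hval
  simpa using hbound
end
end

section
/- Every sign-representation over {1,2} of the n-variable parity function x₁ ⊕ … ⊕ xₙ has at least n + 1 terms. -/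
open Finset

noncomputable section

/-- `Σ_j c j * Π_i x̃_i ^ (e j i)` is a sign-representation of `f` over `{1, 2}`:
substituting `x̃ᵢ = 2 ^ xᵢ ∈ {1, 2}`, the polynomial is nonnegative exactly on the
true points of `f`. -/
def IsSignRep12 {n m : ℕ} (f : (Fin n → Bool) → Bool)
    (c : Fin m → ℝ) (e : Fin m → Fin n → ℕ) : Prop :=
  ∀ x : Fin n → Bool,
    (f x = true ↔ 0 ≤ ∑ j, c j * ∏ i, (if x i then (2 : ℝ) else 1) ^ (e j i))

lemma wt_snoc {n : ℕ} (x' : Fin n → Bool) (b : Bool) :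
    wt (Fin.snoc x' b) = wt x' + (if b then 1 else 0) := by
  unfold wt
  rw [Finset.card_filter, Finset.card_filter, Fin.sum_univ_castSucc]
  simp [Fin.snoc_castSucc, Fin.snoc_last]

lemma parity_snoc_false {n : ℕ} (x' : Fin n → Bool) :
    parity (n+1) (Fin.snoc x' false) = parity n x' := by
  simp [parity, wt_snoc]

lemma parity_snoc_true {n : ℕ} (x' : Fin n → Bool) :
    parity (n+1) (Fin.snoc x' true) = !parity n x' := by
  simp [parity, wt_snoc, Nat.odd_add_one, ← Nat.not_odd_iff_even]

lemma signrep_pos {n m : ℕ} (c : Fin m → ℝ) (e : Fin m → Fin n → ℕ)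
    (h : IsSignRep12 (parity n) c e) : 1 ≤ m := by
  by_contra hm
  push_neg at hm
  interval_cases m
  have := h (fun _ => false)
  simp [parity, wt] at this

/-- Every sign-representation over `{1, 2}` of the `n`-variable parity
function has at least `n + 1` terms. -/
theorem signrep_parity_lower (n m : ℕ) (c : Fin m → ℝ) (e : Fin m → Fin n → ℕ)
    (h : IsSignRep12 (parity n) c e) :
    n + 1 ≤ m := by
  induction n generalizing m c with
  | zero => exact signrep_pos c e h
  | succ n ih =>
    have hm : 1 ≤ m := signrep_pos c e h
    obtain ⟨m', rfl⟩ : ∃ m', m = m' + 1 := ⟨m - 1, by omega⟩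
    have hm1 : (0:ℕ) < m' + 1 := Nat.succ_pos _
    set j0 : Fin (m' + 1) := ⟨0, hm1⟩ with hj0
    set B : ℝ := (2:ℝ) ^ (e j0 (Fin.last n)) with hBdef
    have hBpos : 0 < B := by positivity
    set c' : Fin m' → ℝ := fun k =>
      c (j0.succAbove k) * (B - (2:ℝ) ^ (e (j0.succAbove k) (Fin.last n))) with hc'
    set e' : Fin m' → Fin n → ℕ := fun k i => e (j0.succAbove k) (Fin.castSucc i) with he'
    have hrep : IsSignRep12 (parity n) c' e' := by
      intro x'
      set M : Fin (m'+1) → ℝ :=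
        fun j => ∏ i : Fin n, (if x' i then (2:ℝ) else 1) ^ (e j (Fin.castSucc i)) with hM
      have key : ∀ b : Bool,
          (∑ j, c j * ∏ i, (if (Fin.snoc x' b : Fin (n+1) → Bool) i then (2:ℝ) else 1) ^ (e j i))
          = ∑ j, c j * M j * (if b then (2:ℝ) else 1) ^ (e j (Fin.last n)) := by
        intro b
        refine Finset.sum_congr rfl fun j _ => ?_
        rw [Fin.prod_univ_castSucc, ← mul_assoc, hM]
        simp [Fin.snoc_castSucc, Fin.snoc_last]
      have h0 := h (Fin.snoc x' false)
      have h1 := h (Fin.snoc x' true)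
      rw [parity_snoc_false, key] at h0
      rw [parity_snoc_true, key] at h1
      norm_num at h0 h1
      have hsum : (∑ k : Fin m', c' k * ∏ i, (if x' i then (2:ℝ) else 1) ^ (e' k i))
          = B * (∑ j, c j * M j) - ∑ j, c j * M j * 2 ^ (e j (Fin.last n)) := by
        rw [Finset.mul_sum, ← Finset.sum_sub_distrib,
            Fin.sum_univ_succAbove
              (fun j => B * (c j * M j) - c j * M j * 2 ^ (e j (Fin.last n))) j0]
        have hz : B * (c j0 * M j0) - c j0 * M j0 * 2 ^ (e j0 (Fin.last n)) = 0 := by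
          rw [hBdef]; ring
        rw [hz, zero_add]
        refine Finset.sum_congr rfl fun k _ => ?_
        have hMk : (∏ i, (if x' i then (2:ℝ) else 1) ^ (e' k i)) = M (j0.succAbove k) := by
          rw [hM, he']
        rw [hMk, hc']
        ring
      rw [hsum]
      cases hp : parity n x' with
      | true =>
        rw [hp] at h0 h1
        have hS0 : 0 ≤ ∑ j, c j * M j := h0.mp rfl
        have hS1 : ∑ j, c j * M j * 2 ^ (e j (Fin.last n)) < 0 := by
          by_contra hc2
          push_neg at hc2
          simp [hc2] at h1
        refine iff_of_true rfl ?_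
        nlinarith [mul_nonneg hBpos.le hS0]
      | false =>
        rw [hp] at h0 h1
        have hS1 : 0 ≤ ∑ j, c j * M j * 2 ^ (e j (Fin.last n)) := by simpa using h1
        have hS0 : ∑ j, c j * M j < 0 := by
          by_contra hc2
          push_neg at hc2
          simp [hc2] at h0
        refine iff_of_false (by simp) ?_
        push_neg
        nlinarith [mul_pos hBpos (neg_pos.2 hS0)]
    have := ih m' c' e' hrep
    omega
end
end
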